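/- arXiv:2106.06221 — 10 statements merged into one kernel-verified Lean document; each statement's English description precedes it below -/
import Mathlib

section
/- Let f : ℤ → ℤ be a bi-Lipschitz bijection (with respect to the usual metric on ℤ). Then either sup_{x ∈ ℤ} |f(x) − x| < ∞ or sup_{x ∈ ℤ} |f(x) + x| < ∞. -/
private lemma ne_far (f : ℤ → ℤ) (C : ℤ) (hC : 0 < C)
    (hcolip : ∀ x y : ℤ, |x - y| ≤ C * |f x - f y|)
    {a x : ℤ} (h : a + C^2 < x) : f x ≠ f a := by
  intro he
  have h2 := hcolip x a
  rw [he, sub_self, abs_zero, mul_zero] at h2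
  have h3 := le_abs_self (x - a)
  nlinarith [pow_pos hC 2]

private lemma no_cross (f : ℤ → ℤ) (C : ℤ) (hC : 0 < C)
    (hlip : ∀ x y : ℤ, |f x - f y| ≤ C * |x - y|)
    (hcolip : ∀ x y : ℤ, |x - y| ≤ C * |f x - f y|)
    {a p q : ℤ} (hp : a + C^2 < p) (hq : a + C^2 < q)
    (h1 : f a < f p) (h2 : f q < f a) : False := by
  have hsq : C^2 = C * C := sq C
  rcases le_or_gt p q with hpq | hpq
  · set S := (Finset.Icc p q).filter (fun z => f a < f z) with hS
    have hpS : p ∈ S := by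
      simp only [hS, Finset.mem_filter, Finset.mem_Icc]
      exact ⟨⟨le_refl p, hpq⟩, h1⟩
    have hne : S.Nonempty := ⟨p, hpS⟩
    have hzS := S.max'_mem hne
    set z := S.max' hne with hz
    simp only [hS, Finset.mem_filter, Finset.mem_Icc] at hzS
    obtain ⟨⟨hz1, hz2⟩, hz3⟩ := hzS
    have hzq : z < q := by
      rcases lt_or_eq_of_le hz2 with h | h
      · exact h
      · exact absurd (h ▸ hz3) (not_lt.mpr h2.le)
    have hfz1 : f (z+1) ≤ f a := by
      by_contra hcon
      push_neg at hcon
      have hmem : z + 1 ∈ S := by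
        simp only [hS, Finset.mem_filter, Finset.mem_Icc]
        exact ⟨⟨by omega, by omega⟩, hcon⟩
      have := S.le_max' _ hmem
      rw [← hz] at this
      omega
    have hstep : |f z - f (z+1)| ≤ C := by
      have h := hlip z (z+1)
      simpa using h
    have hstep' : f z - f (z+1) ≤ C := le_trans (le_abs_self _) hstep
    have habs : |f (z+1) - f a| ≤ C - 1 := by
      rw [abs_le]; constructor <;> linarith
    have hco := hcolip (z+1) a
    have hle : z + 1 - a ≤ |z + 1 - a| := le_abs_self _
    have hmul : C * |f (z+1) - f a| ≤ C * (C - 1) :=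
      mul_le_mul_of_nonneg_left habs hC.le
    nlinarith
  · set S := (Finset.Icc q p).filter (fun z => f z < f a) with hS
    have hqS : q ∈ S := by
      simp only [hS, Finset.mem_filter, Finset.mem_Icc]
      exact ⟨⟨le_refl q, hpq.le⟩, h2⟩
    have hne : S.Nonempty := ⟨q, hqS⟩
    have hzS := S.max'_mem hne
    set z := S.max' hne with hz
    simp only [hS, Finset.mem_filter, Finset.mem_Icc] at hzS
    obtain ⟨⟨hz1, hz2⟩, hz3⟩ := hzS
    have hzp : z < p := by
      rcases lt_or_eq_of_le hz2 with h | h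
      · exact h
      · exact absurd (h ▸ hz3) (not_lt.mpr h1.le)
    have hfz1 : f a ≤ f (z+1) := by
      by_contra hcon
      push_neg at hcon
      have hmem : z + 1 ∈ S := by
        simp only [hS, Finset.mem_filter, Finset.mem_Icc]
        exact ⟨⟨by omega, by omega⟩, hcon⟩
      have := S.le_max' _ hmem
      rw [← hz] at this
      omega
    have hstep : |f (z+1) - f z| ≤ C := by
      have h := hlip (z+1) z
      simpa using h
    have hstep' : f (z+1) - f z ≤ C := le_trans (le_abs_self _) hstep
    have habs : |f (z+1) - f a| ≤ C - 1 := by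
      rw [abs_le]; constructor <;> linarith
    have hco := hcolip (z+1) a
    have hle : z + 1 - a ≤ |z + 1 - a| := le_abs_self _
    have hmul : C * |f (z+1) - f a| ≤ C * (C - 1) :=
      mul_le_mul_of_nonneg_left habs hC.le
    nlinarith

private lemma pos_of_pt (f : ℤ → ℤ) (C : ℤ) (hC : 0 < C)
    (hlip : ∀ x y : ℤ, |f x - f y| ≤ C * |x - y|)
    (hcolip : ∀ x y : ℤ, |x - y| ≤ C * |f x - f y|)
    (h : f 0 < f (C^2 + 1)) :
    ∀ x : ℤ, C^2 < x → f 0 < f x := by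
  intro x hx
  rcases lt_trichotomy (f 0) (f x) with h1 | h1 | h1
  · exact h1
  · exact absurd h1.symm (ne_far f C hC hcolip (by linarith : (0:ℤ) + C^2 < x))
  · exact absurd (no_cross f C hC hlip hcolip
      (by linarith : (0:ℤ) + C^2 < C^2 + 1) (by linarith : (0:ℤ) + C^2 < x) h h1) (fun h => h)

private lemma propagate (f : ℤ → ℤ) (C : ℤ) (hC : 0 < C)
    (hlip : ∀ x y : ℤ, |f x - f y| ≤ C * |x - y|)
    (hcolip : ∀ x y : ℤ, |x - y| ≤ C * |f x - f y|)
    (h0 : ∀ x : ℤ, C^2 < x → f 0 < f x) :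
    ∀ a x : ℤ, a + C^2 < x → f a < f x := by
  intro a x hx
  rcases lt_trichotomy (f a) (f x) with h | h | h
  · exact h
  · exact absurd h.symm (ne_far f C hC hcolip hx)
  · exfalso
    set x0 := |a| + C^2 + C * |f a - f 0| + 1 with hx0def
    have habs_a := le_abs_self a
    have habsnn := abs_nonneg a
    have hsqpos := pow_pos hC 2
    have hmul0 : 0 ≤ C * |f a - f 0| := mul_nonneg hC.le (abs_nonneg _)
    have hx0a : a + C^2 < x0 := by linarith
    have hx00 : C^2 < x0 := by linarith
    have h1 := h0 x0 hx00
    rcases lt_trichotomy (f a) (f x0) with h2 | h2 | h2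
    · exact no_cross f C hC hlip hcolip hx0a hx h2 h
    · exact (ne_far f C hC hcolip hx0a) h2.symm
    · have hco := hcolip x0 0
      rw [sub_zero, abs_of_pos (by linarith : (0:ℤ) < x0),
        abs_of_pos (by linarith : (0:ℤ) < f x0 - f 0)] at hco
      have h3 : f x0 - f 0 ≤ |f a - f 0| - 1 := by
        have := le_abs_self (f a - f 0); linarith
      have h4 : C * (f x0 - f 0) ≤ C * (|f a - f 0| - 1) :=
        mul_le_mul_of_nonneg_left h3 hC.le
      nlinarith

private lemma dichotomy (f : ℤ → ℤ) (C : ℤ) (hC : 0 < C)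
    (hlip : ∀ x y : ℤ, |f x - f y| ≤ C * |x - y|)
    (hcolip : ∀ x y : ℤ, |x - y| ≤ C * |f x - f y|) :
    (∀ a x : ℤ, a + C^2 < x → f a < f x) ∨ (∀ a x : ℤ, a + C^2 < x → f x < f a) := by
  have hlipn : ∀ x y : ℤ, |(fun z => -f z) x - (fun z => -f z) y| ≤ C * |x - y| := by
    intro x y
    simp only
    rw [show -f x - -f y = -(f x - f y) by ring, abs_neg]
    exact hlip x y
  have hcolipn : ∀ x y : ℤ, |x - y| ≤ C * |(fun z => -f z) x - (fun z => -f z) y| := by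
    intro x y
    simp only
    rw [show -f x - -f y = -(f x - f y) by ring, abs_neg]
    exact hcolip x y
  rcases lt_trichotomy (f 0) (f (C^2 + 1)) with h | h | h
  · exact Or.inl (propagate f C hC hlip hcolip (pos_of_pt f C hC hlip hcolip h))
  · exact absurd h.symm (ne_far f C hC hcolip (by linarith : (0:ℤ) + C^2 < C^2 + 1))
  · right
    intro a x hx
    have hpt : (fun z => -f z) 0 < (fun z => -f z) (C^2 + 1) := by
      simp only
      omega
    have := propagate (fun z => -f z) C hC hlipn hcolipn
      (pos_of_pt (fun z => -f z) C hC hlipn hcolipn hpt) a x hx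
    omega

private lemma bounded_of_pos (f : ℤ → ℤ) (hbij : Function.Bijective f) (C : ℤ) (hC : 0 < C)
    (hlip : ∀ x y : ℤ, |f x - f y| ≤ C * |x - y|)
    (P : ∀ a x : ℤ, a + C^2 < x → f a < f x) :
    ∃ M : ℤ, ∀ x : ℤ, |f x - x| ≤ M := by
  obtain ⟨c, hc⟩ : ∃ c : ℤ, c = C^2 := ⟨C^2, rfl⟩
  have hc0 : 0 < c := hc ▸ pow_pos hC 2
  have P' : ∀ a x : ℤ, a + c < x → f a < f x := fun a x h => P a x (by rw [← hc]; exact h)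
  have upper : ∀ u u' : ℤ, u ≤ u' → f u' - f u ≤ u' - u + 2*c + 1 := by
    intro u u' huu
    rcases le_or_gt (f u') (f u) with h | h
    · omega
    · have hsub : Finset.Icc (f u + 1) (f u') ⊆ (Finset.Icc (u - c) (u' + c)).image f := by
        intro v hv
        rw [Finset.mem_Icc] at hv
        obtain ⟨w, hw⟩ := hbij.2 v
        rw [Finset.mem_image]
        refine ⟨w, ?_, hw⟩
        rw [Finset.mem_Icc]
        constructor
        · by_contra hcon
          push_neg at hcon
          have hlt := P' w u (by omega)
          rw [hw] at hlt
          omega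
        · by_contra hcon
          push_neg at hcon
          have hlt := P' u' w (by omega)
          rw [hw] at hlt
          omega
      have hcard : (f u' + 1 - (f u + 1)).toNat ≤ (u' + c + 1 - (u - c)).toNat := by
        calc (f u' + 1 - (f u + 1)).toNat
            = (Finset.Icc (f u + 1) (f u')).card := (Int.card_Icc _ _).symm
          _ ≤ ((Finset.Icc (u - c) (u' + c)).image f).card := Finset.card_le_card hsub
          _ ≤ (Finset.Icc (u - c) (u' + c)).card := Finset.card_image_le
          _ = (u' + c + 1 - (u - c)).toNat := Int.card_Icc _ _
      omega
  have lower : ∀ u u' : ℤ, u ≤ u' → u' - u - (C+1)*(2*c+2) ≤ f u' - f u := by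
    intro u u' huu
    rcases le_or_gt (u' - u) (2*c + 1) with hsmall | hbig
    · have h1 := hlip u' u
      rw [abs_of_nonneg (by omega : (0:ℤ) ≤ u' - u)] at h1
      have h2 := neg_abs_le (f u' - f u)
      have h3 : C * (u' - u) ≤ C * (2*c + 2) :=
        mul_le_mul_of_nonneg_left (by omega) hC.le
      nlinarith
    · have hmap : ∀ w ∈ Finset.Icc (u + c + 1) (u' - c - 1),
          f w ∈ Finset.Icc (f u + 1) (f u' - 1) := by
        intro w hw
        rw [Finset.mem_Icc] at hw ⊢
        constructor
        · have := P' u w (by omega); omega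
        · have := P' w u' (by omega); omega
      have hcard : (u' - c - 1 + 1 - (u + c + 1)).toNat ≤ (f u' - 1 + 1 - (f u + 1)).toNat := by
        calc (u' - c - 1 + 1 - (u + c + 1)).toNat
            = (Finset.Icc (u + c + 1) (u' - c - 1)).card := (Int.card_Icc _ _).symm
          _ ≤ (Finset.Icc (f u + 1) (f u' - 1)).card :=
              Finset.card_le_card_of_injOn f hmap (fun x _ y _ hxy => hbij.1 hxy)
          _ = (f u' - 1 + 1 - (f u + 1)).toNat := Int.card_Icc _ _
      have h3 : u' - u - 2*c - 1 ≤ f u' - f u := by omega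
      nlinarith [mul_nonneg hC.le hc0.le]
  refine ⟨|f 0| + (C+1)*(2*c+2), fun x => ?_⟩
  have habs1 := le_abs_self (f 0)
  have habs2 := neg_abs_le (f 0)
  have hmn : 0 ≤ C * c := mul_nonneg hC.le hc0.le
  rw [abs_le]
  rcases le_or_gt 0 x with hx | hx
  · have h1 := upper 0 x hx
    have h2 := lower 0 x hx
    constructor
    · nlinarith
    · nlinarith
  · have h1 := upper x 0 hx.le
    have h2 := lower x 0 hx.le
    constructor
    · nlinarith
    · nlinarith

/-- Benjamini–Shamov: a bi-Lipschitz bijection `f : ℤ → ℤ` satisfies either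
`sup |f x − x| < ∞` or `sup |f x + x| < ∞`. -/
theorem biLipschitz_bijection_int (f : ℤ → ℤ) (hbij : Function.Bijective f)
    (C : ℤ) (hC : 0 < C)
    (hlip : ∀ x y : ℤ, |f x - f y| ≤ C * |x - y|)
    (hcolip : ∀ x y : ℤ, |x - y| ≤ C * |f x - f y|) :
    (∃ M : ℤ, ∀ x : ℤ, |f x - x| ≤ M) ∨ (∃ M : ℤ, ∀ x : ℤ, |f x + x| ≤ M) := by
  rcases dichotomy f C hC hlip hcolip with hpos | hneg
  · exact Or.inl (bounded_of_pos f hbij C hC hlip hpos)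
  · right
    have hbijn : Function.Bijective (fun z => -f z) :=
      Function.Bijective.comp neg_involutive.bijective hbij
    have hlipn : ∀ x y : ℤ, |(fun z => -f z) x - (fun z => -f z) y| ≤ C * |x - y| := by
      intro x y
      simp only
      rw [show -f x - -f y = -(f x - f y) by ring, abs_neg]
      exact hlip x y
    have Pn : ∀ a x : ℤ, a + C^2 < x → (fun z => -f z) a < (fun z => -f z) x := by
      intro a x h
      simp only
      have := hneg a x h
      omega
    obtain ⟨M, hM⟩ := bounded_of_pos (fun z => -f z) hbijn C hC hlipn Pn
    refine ⟨M, fun x => ?_⟩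
    have := hM x
    rw [show -f x - x = -(f x + x) by ring, abs_neg] at this
    exact this
end

section
/- Let X be a compact Hausdorff space, f : X → X a minimal continuous map (i.e., every forward orbit is dense), and g : X → ℝ a continuous function such that sup_{n ∈ ℕ} |Σ_{i=0}^{n} g(f^i(x₀))| < ∞ for some point x₀ ∈ X. Then there exists a continuous function φ : X → ℝ with φ ∘ f − φ = g. -/
/-- Gottschalk–Hedlund theorem: if `f : X → X` is a minimal continuous map of a compact
Hausdorff space, `g : X → ℝ` continuous, and the partial sums of `g` along the forward
orbit of some point `x₀` are bounded, then `g = φ ∘ f − φ` for a continuous `φ`. -/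
theorem gottschalk_hedlund {X : Type*} [TopologicalSpace X] [CompactSpace X] [T2Space X]
    (f : X → X) (hf : Continuous f)
    (hmin : ∀ x : X, Dense (Set.range fun n : ℕ => f^[n] x))
    (g : X → ℝ) (hg : Continuous g)
    (x₀ : X) (C : ℝ)
    (hbd : ∀ n : ℕ, |∑ i ∈ Finset.range (n + 1), g (f^[i] x₀)| ≤ C) :
    ∃ φ : X → ℝ, Continuous φ ∧ ∀ x, φ (f x) - φ x = g x := by
  classical
  -- the skew product
  set F : X × ℝ → X × ℝ := fun p => (f p.1, p.2 + g p.1) with hFdef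
  have hF : Continuous F := (hf.comp continuous_fst).prodMk
    (continuous_snd.add (hg.comp continuous_fst))
  -- iterate formula
  have hiter : ∀ (n : ℕ) (x : X) (t : ℝ),
      F^[n] (x, t) = (f^[n] x, t + ∑ i ∈ Finset.range n, g (f^[i] x)) := by
    intro n
    induction n with
    | zero => intro x t; simp
    | succ n ih =>
      intro x t
      rw [Function.iterate_succ_apply]
      show F^[n] (f x, t + g x) = _
      rw [ih]
      refine Prod.ext ?_ ?_
      · exact (Function.iterate_succ_apply f n x).symm
      · simp only [Finset.sum_range_succ']
        simp [Function.iterate_succ_apply, add_comm, add_assoc, add_left_comm]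
  have hC0 : 0 ≤ C := le_trans (abs_nonneg _) (by simpa using hbd 0)
  -- bound on the orbit of (x₀, 0)
  have horb : ∀ n : ℕ, F^[n] (x₀, 0) ∈ (Set.univ : Set X) ×ˢ Set.Icc (-C) C := by
    intro n
    rw [hiter]
    refine ⟨trivial, ?_⟩
    rcases n with _ | m
    · simp only [Finset.range_zero, Finset.sum_empty, add_zero]
      exact ⟨by linarith, by linarith⟩
    · have := abs_le.mp (hbd m)
      simpa using this
  set K : Set (X × ℝ) := closure (Set.range fun n : ℕ => F^[n] (x₀, 0)) with hKdef
  have hKsub : K ⊆ (Set.univ : Set X) ×ˢ Set.Icc (-C) C := by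
    refine closure_minimal ?_ (isClosed_univ.prod isClosed_Icc)
    rintro _ ⟨n, rfl⟩; exact horb n
  have hKcomp : IsCompact K :=
    (isCompact_univ.prod isCompact_Icc).of_isClosed_subset isClosed_closure hKsub
  have hKne : K.Nonempty := ⟨(x₀, 0), subset_closure ⟨0, rfl⟩⟩
  have hKinv : F '' K ⊆ K := by
    refine (image_closure_subset_closure_image hF).trans (closure_mono ?_)
    rintro _ ⟨_, ⟨n, rfl⟩, rfl⟩
    exact ⟨n + 1, Function.iterate_succ_apply' F n (x₀, 0)⟩
  -- Zorn: get a minimal closed invariant subset M ⊆ K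
  set 𝒮 : Set (Set (X × ℝ)) :=
    {A | A.Nonempty ∧ IsClosed A ∧ A ⊆ K ∧ F '' A ⊆ A} with h𝒮def
  obtain ⟨M, -, hM𝒮, hMmin⟩ := zorn_superset_nonempty 𝒮 (by
    intro c hc hchain hcne
    refine ⟨⋂₀ c, ⟨?_, ?_, ?_, ?_⟩, fun s hs => Set.sInter_subset_of_mem hs⟩
    · have : Nonempty c := hcne.to_subtype
      have := IsCompact.nonempty_iInter_of_directed_nonempty_isCompact_isClosed
        (fun A : c => (A : Set (X × ℝ)))
        (fun A B => by
          rcases eq_or_ne A B with rfl | hne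
          · exact ⟨A, le_refl _, le_refl _⟩
          · rcases hchain A.2 B.2 (fun h => hne (Subtype.ext h)) with h | h
            · exact ⟨A, le_refl _, h⟩
            · exact ⟨B, h, le_refl _⟩)
        (fun A => (hc A.2).1)
        (fun A => hKcomp.of_isClosed_subset (hc A.2).2.1 (hc A.2).2.2.1)
        (fun A => (hc A.2).2.1)
      rwa [Set.sInter_eq_iInter]
    · exact isClosed_sInter fun A hA => (hc hA).2.1
    · obtain ⟨A, hA⟩ := hcne
      exact (Set.sInter_subset_of_mem hA).trans (hc hA).2.2.1
    · intro p hp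
      rw [Set.mem_sInter]
      intro A hA
      rcases hp with ⟨q, hq, rfl⟩
      exact (hc hA).2.2.2 ⟨q, Set.mem_sInter.mp hq A hA, rfl⟩) K ⟨hKne, isClosed_closure, le_refl _, hKinv⟩
  obtain ⟨hMne, hMcl, hMK, hMinv⟩ := hM𝒮
  have hMcomp : IsCompact M := hKcomp.of_isClosed_subset hMcl hMK
  -- orbits stay in M
  have horbM : ∀ p ∈ M, ∀ n : ℕ, F^[n] p ∈ M := by
    intro p hp n
    induction n with
    | zero => exact hp
    | succ n ih =>
      rw [Function.iterate_succ_apply']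
      exact hMinv ⟨_, ih, rfl⟩
  -- orbit closures of points of M equal M
  have horbcl : ∀ p ∈ M, closure (Set.range fun n : ℕ => F^[n] p) = M := by
    intro p hp
    have hsub : closure (Set.range fun n : ℕ => F^[n] p) ⊆ M :=
      closure_minimal (by rintro _ ⟨n, rfl⟩; exact horbM p hp n) hMcl
    refine subset_antisymm hsub (hMmin ⟨⟨p, subset_closure ⟨0, rfl⟩⟩,
      isClosed_closure, hsub.trans hMK, ?_⟩ hsub)
    refine (image_closure_subset_closure_image hF).trans (closure_mono ?_)
    rintro _ ⟨_, ⟨n, rfl⟩, rfl⟩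
    exact ⟨n + 1, Function.iterate_succ_apply' F n p⟩
  -- M is a graph
  have hgraph : ∀ x : X, ∀ t₁ t₂ : ℝ, (x, t₁) ∈ M → (x, t₂) ∈ M → t₁ = t₂ := by
    have key : ∀ x : X, ∀ t₁ t₂ : ℝ, (x, t₁) ∈ M → (x, t₂) ∈ M → t₁ < t₂ → False := by
      intro x t₁ t₂ h₁ h₂ hlt
      set c : ℝ := t₂ - t₁ with hcdef
      have hc : 0 < c := sub_pos.mpr hlt
      set T : (X × ℝ) ≃ₜ (X × ℝ) :=
        (Homeomorph.refl X).prodCongr (Homeomorph.addRight c) with hTdef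
      have hTF : ∀ (n : ℕ) (y : X) (s : ℝ), T (F^[n] (y, s)) = F^[n] (y, s + c) := by
        intro n y s
        rw [hiter, hiter]
        show (f^[n] y, s + _ + c) = (f^[n] y, s + c + _)
        rw [add_right_comm]
      have hTM : T '' M = M := by
        conv_lhs => rw [← horbcl (x, t₁) h₁]
        rw [Homeomorph.image_closure]
        have : T '' (Set.range fun n : ℕ => F^[n] (x, t₁))
            = Set.range fun n : ℕ => F^[n] (x, t₂) := by
          ext q
          constructor
          · rintro ⟨_, ⟨n, rfl⟩, rfl⟩
            exact ⟨n, by rw [hTF n x t₁]; rw [hcdef]; ring_nf⟩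
          · rintro ⟨n, rfl⟩
            exact ⟨F^[n] (x, t₁), ⟨n, rfl⟩, by rw [hTF n x t₁]; rw [hcdef]; ring_nf⟩
        rw [this]
        exact horbcl (x, t₂) h₂
      have hstep : ∀ n : ℕ, (x, t₁ + n * c) ∈ M := by
        intro n
        induction n with
        | zero => simpa using h₁
        | succ n ih =>
          have : T (x, t₁ + n * c) ∈ T '' M := ⟨_, ih, rfl⟩
          rw [hTM] at this
          have heq : T ((x : X), t₁ + n * c) = (x, t₁ + (n + 1 : ℕ) * c) := by
            show ((x : X), t₁ + n * c + c) = _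
            push_cast
            ring_nf
          rwa [heq] at this
      obtain ⟨n, hn⟩ := exists_nat_gt ((C - t₁) / c)
      have hnc : C - t₁ < n * c := (div_lt_iff₀ hc).mp hn
      have hle : t₁ + (n : ℝ) * c ≤ C := (hKsub (hMK (hstep n))).2.2
      linarith
    intro x t₁ t₂ h₁ h₂
    rcases lt_trichotomy t₁ t₂ with h | h | h
    · exact absurd (key x t₁ t₂ h₁ h₂ h) (fun h => h)
    · exact h
    · exact absurd (key x t₂ t₁ h₂ h₁ h) (fun h => h)
  -- projection of M is all of X
  have hproj : ∀ x : X, ∃ t : ℝ, (x, t) ∈ M := by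
    have hPcl : IsClosed (Prod.fst '' M) :=
      (hMcomp.image continuous_fst).isClosed
    obtain ⟨⟨y, s⟩, hys⟩ := hMne
    have hdense : Dense (Set.range fun n : ℕ => f^[n] y) := hmin y
    have hsub : Set.range (fun n : ℕ => f^[n] y) ⊆ Prod.fst '' M := by
      rintro _ ⟨n, rfl⟩
      refine ⟨F^[n] (y, s), horbM _ hys n, ?_⟩
      rw [hiter]
    have : (Set.univ : Set X) ⊆ Prod.fst '' M := by
      rw [← hPcl.closure_eq]
      intro x _
      exact closure_mono hsub (hdense x)
    intro x
    obtain ⟨⟨x', t⟩, hmem, hx'⟩ := this (Set.mem_univ x)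
    exact ⟨t, by rwa [show x' = x from hx'] at hmem⟩
  -- M as a compact space, homeomorphic to X via the projection
  haveI : CompactSpace M := isCompact_iff_compactSpace.mp hMcomp
  have hbij : Function.Bijective (fun p : M => (p : X × ℝ).1) := by
    constructor
    · rintro ⟨⟨x₁, t₁⟩, h₁⟩ ⟨⟨x₂, t₂⟩, h₂⟩ h
      simp only at h
      subst h
      exact Subtype.ext (Prod.ext rfl (hgraph x₁ t₁ t₂ h₁ h₂))
    · intro x
      obtain ⟨t, ht⟩ := hproj x
      exact ⟨⟨(x, t), ht⟩, rfl⟩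
  have hcont : Continuous (fun p : M => (p : X × ℝ).1) :=
    continuous_fst.comp continuous_subtype_val
  set e : M ≃ₜ X := hcont.homeoOfEquivCompactToT2 (f := Equiv.ofBijective _ hbij)
  set φ : X → ℝ := fun x => ((e.symm x : M) : X × ℝ).2 with hφdef
  have hφmem : ∀ x : X, (x, φ x) ∈ M := by
    intro x
    have h1 : ((e.symm x : M) : X × ℝ).1 = x := e.apply_symm_apply x
    have : ((e.symm x : M) : X × ℝ) = (x, φ x) := Prod.ext h1 rfl
    rw [← this]
    exact (e.symm x : M).2
  refine ⟨φ, continuous_snd.comp (continuous_subtype_val.comp e.symm.continuous), ?_⟩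
  intro x
  have h1 : (f x, φ x + g x) ∈ M := hMinv ⟨(x, φ x), hφmem x, rfl⟩
  have h2 : (f x, φ (f x)) ∈ M := hφmem (f x)
  have := hgraph (f x) (φ (f x)) (φ x + g x) h2 h1
  linarith
end

section
/- Let α : ℤ × X → X be a continuous minimal ℤ-action on a compact Hausdorff space X, let K be a topological group and K₀ ⊆ K a closed subgroup. Suppose c : ℤ × X → K₀ is a continuous cocycle (c(m+n, x) = c(m, α(n,x))·c(n,x)) and there is a continuous map f : X → K with c(n, x) = f(α(n,x))·f(x)⁻¹ for all n ∈ ℤ, x ∈ X. Then there exists a continuous map f' : X → K₀ with c(n, x) = f'(α(n,x))·f'(x)⁻¹ for all n ∈ ℤ, x ∈ X. -/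
/-- If a `K₀`-valued continuous cocycle over a minimal `ℤ`-action is a coboundary with
transfer function valued in the ambient topological group `K ⊇ K₀` (with `K₀` closed),
then it is a coboundary with a `K₀`-valued transfer function. -/
theorem coboundary_independent_of_target_group
    {X : Type*} [TopologicalSpace X] [CompactSpace X] [T2Space X]
    {K : Type*} [Group K] [TopologicalSpace K] [IsTopologicalGroup K]
    (α : ℤ → X → X) (hcont : Continuous fun p : ℤ × X => α p.1 p.2)
    (hzero : ∀ x, α 0 x = x) (hadd : ∀ m n x, α (m + n) x = α m (α n x))
    (hmin : ∀ x : X, Dense (Set.range fun n : ℤ => α n x))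
    (K₀ : Subgroup K) (hK₀ : IsClosed (K₀ : Set K))
    (c : ℤ → X → K) (hcK₀ : ∀ n x, c n x ∈ K₀)
    (hccont : Continuous fun p : ℤ × X => c p.1 p.2)
    (hcocycle : ∀ m n x, c (m + n) x = c m (α n x) * c n x)
    (f : X → K) (hf : Continuous f)
    (hcob : ∀ n x, c n x = f (α n x) * (f x)⁻¹) :
    ∃ f' : X → K, Continuous f' ∧ (∀ x, f' x ∈ K₀) ∧
      ∀ n x, c n x = f' (α n x) * (f' x)⁻¹ := by
  rcases isEmpty_or_nonempty X with h | h
  · exact ⟨f, hf, fun x => (h.false x).elim, hcob⟩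
  · obtain ⟨x₀⟩ := h
    set f' : X → K := fun x => f x * (f x₀)⁻¹ with hf'
    have hf'cont : Continuous f' := hf.mul continuous_const
    refine ⟨f', hf'cont, ?_, ?_⟩
    · -- f' lands in K₀: holds on dense orbit of x₀, K₀ closed
      have hclosed : IsClosed (f' ⁻¹' (K₀ : Set K)) := hK₀.preimage hf'cont
      have horb : Set.range (fun n : ℤ => α n x₀) ⊆ f' ⁻¹' (K₀ : Set K) := by
        rintro _ ⟨n, rfl⟩
        have := hcob n x₀
        simp only [f', Set.mem_preimage, SetLike.mem_coe]
        rw [← this]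
        exact hcK₀ n x₀
      intro x
      have hsub : closure (Set.range fun n : ℤ => α n x₀) ⊆ f' ⁻¹' (K₀ : Set K) :=
        hclosed.closure_subset_iff.mpr horb
      exact hsub ((hmin x₀).closure_eq ▸ Set.mem_univ x)
    · intro n x
      simp only [f', mul_inv_rev, inv_inv]
      rw [hcob n x]
      group
end

section
/- Let G and K be finitely generated groups with symmetric generating sets S and T, and let G ↷ X and K ↷ Y be topologically free continuous actions on compact spaces that are continuously orbit equivalent with orbit cocycle a : G × X → K. Then for each fixed x ∈ X, the map g ↦ a(g, x) is Lipschitz from (G, d_S) to (K, d_T), where d_S and d_T are the right-invariant word metrics; specifically d_T(a(g₁,x), a(g₂,x)) ≤ C · d_S(g₁, g₂) with C = sup_{x∈X} max_{s∈S} |a(s,x)|_T. -/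
/-- Word length of `g` with respect to a generating set `S`. -/
noncomputable def wordLength {G : Type*} [Group G] (S : Set G) (g : G) : ℕ :=
  sInf {n | ∃ l : List G, (∀ x ∈ l, x ∈ S) ∧ l.prod = g ∧ l.length = n}

lemma exists_rep {G : Type*} [Group G] {S : Set G} (hSsym : ∀ s ∈ S, s⁻¹ ∈ S)
    (hSgen : Subgroup.closure S = ⊤) (g : G) :
    ∃ l : List G, (∀ x ∈ l, x ∈ S) ∧ l.prod = g := by
  have hg : g ∈ Subgroup.closure S := by rw [hSgen]; trivial
  induction hg using Subgroup.closure_induction with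
  | mem x hx => exact ⟨[x], by simpa using hx, by simp⟩
  | one => exact ⟨[], by simp, by simp⟩
  | mul x y hx hy ihx ihy =>
    obtain ⟨l1, h1, p1⟩ := ihx
    obtain ⟨l2, h2, p2⟩ := ihy
    refine ⟨l1 ++ l2, ?_, by simp [p1, p2]⟩
    intro z hz
    rcases List.mem_append.1 hz with h | h
    exacts [h1 z h, h2 z h]
  | inv x hx ih =>
    obtain ⟨l, h1, p1⟩ := ih
    refine ⟨(l.map (·⁻¹)).reverse, ?_, ?_⟩
    · intro z hz
      simp only [List.mem_reverse, List.mem_map] at hz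
      obtain ⟨w, hw, rfl⟩ := hz
      exact hSsym w (h1 w hw)
    · rw [List.prod_reverse_noncomm, ← p1]
      simp

lemma wordLength_nonempty {G : Type*} [Group G] {S : Set G} (hSsym : ∀ s ∈ S, s⁻¹ ∈ S)
    (hSgen : Subgroup.closure S = ⊤) (g : G) :
    {n | ∃ l : List G, (∀ x ∈ l, x ∈ S) ∧ l.prod = g ∧ l.length = n}.Nonempty := by
  obtain ⟨l, h1, h2⟩ := exists_rep hSsym hSgen g
  exact ⟨l.length, l, h1, h2, rfl⟩

lemma wordLength_le {G : Type*} [Group G] {S : Set G} {g : G} {l : List G}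
    (h1 : ∀ x ∈ l, x ∈ S) (h2 : l.prod = g) : wordLength S g ≤ l.length :=
  Nat.sInf_le ⟨l, h1, h2, rfl⟩

lemma wordLength_mul_le {G : Type*} [Group G] {S : Set G} (hSsym : ∀ s ∈ S, s⁻¹ ∈ S)
    (hSgen : Subgroup.closure S = ⊤) (g h : G) :
    wordLength S (g * h) ≤ wordLength S g + wordLength S h := by
  obtain ⟨l1, h11, h12, h13⟩ := Nat.sInf_mem (wordLength_nonempty hSsym hSgen g)
  obtain ⟨l2, h21, h22, h23⟩ := Nat.sInf_mem (wordLength_nonempty hSsym hSgen h)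
  calc wordLength S (g * h) ≤ (l1 ++ l2).length := wordLength_le
        (by intro z hz; rcases List.mem_append.1 hz with hh | hh; exacts [h11 z hh, h21 z hh])
        (by simp [h12, h22])
    _ = _ := by simp [h13, h23]; rfl

/-- For a continuous orbit equivalence between topologically free actions of finitely
generated groups, the orbit cocycle `g ↦ a(g,x)` is Lipschitz for the right-invariant
word metrics, with Lipschitz constant any bound `C` on the lengths of the values of
the cocycle on generators. -/
theorem orbit_cocycle_lipschitz
    {G K : Type*} [Group G] [Group K]
    [TopologicalSpace G] [DiscreteTopology G] [TopologicalSpace K] [DiscreteTopology K]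
    (S : Set G) (hSfin : S.Finite) (hSsym : ∀ s ∈ S, s⁻¹ ∈ S)
    (hSgen : Subgroup.closure S = ⊤)
    (T : Set K) (hTfin : T.Finite) (hTsym : ∀ t ∈ T, t⁻¹ ∈ T)
    (hTgen : Subgroup.closure T = ⊤)
    {X Y : Type*} [TopologicalSpace X] [CompactSpace X] [T2Space X]
    [TopologicalSpace Y] [CompactSpace Y] [T2Space Y]
    [MulAction G X] [MulAction K Y]
    (hGcont : ∀ g : G, Continuous fun x : X => g • x)
    (hKcont : ∀ k : K, Continuous fun y : Y => k • y)
    (hGfree : ∀ g : G, g ≠ 1 → Dense {x : X | g • x ≠ x})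
    (hKfree : ∀ k : K, k ≠ 1 → Dense {y : Y | k • y ≠ y})
    (φ : X ≃ₜ Y) (a : G → X → K) (b : K → Y → G)
    (ha : ∀ g, Continuous (a g)) (hb : ∀ k, Continuous (b k))
    (haφ : ∀ g x, φ (g • x) = a g x • φ x)
    (hbφ : ∀ k y, φ.symm (k • y) = b k y • φ.symm y)
    (C : ℕ) (hC : ∀ x : X, ∀ s ∈ S, wordLength T (a s x) ≤ C) :
    ∀ x : X, ∀ g₁ g₂ : G,
      wordLength T (a g₂ x * (a g₁ x)⁻¹) ≤ C * wordLength S (g₂ * g₁⁻¹) := by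
  -- the cocycle identity
  have cocycle : ∀ g g' : G, ∀ x : X, a (g * g') x = a g (g' • x) * a g' x := by
    intro g g'
    set c : X → K := fun x => (a (g * g') x)⁻¹ * (a g (g' • x) * a g' x) with hcdef
    have key : ∀ x, c x • φ x = φ x := by
      intro x
      have hmain : (a g (g' • x) * a g' x) • φ x = a (g * g') x • φ x := by
        calc (a g (g' • x) * a g' x) • φ x = a g (g' • x) • (a g' x • φ x) := mul_smul _ _ _
          _ = a g (g' • x) • φ (g' • x) := by rw [haφ]
          _ = φ (g • (g' • x)) := (haφ _ _).symm
          _ = φ ((g * g') • x) := by rw [mul_smul]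
          _ = a (g * g') x • φ x := haφ _ _
      calc c x • φ x = (a (g * g') x)⁻¹ • ((a g (g' • x) * a g' x) • φ x) := mul_smul _ _ _
        _ = (a (g * g') x)⁻¹ • (a (g * g') x • φ x) := by rw [hmain]
        _ = φ x := inv_smul_smul _ _
    have hcone : ∀ x, c x = 1 := by
      intro x₀
      by_contra hne
      set U : Set X := (a (g * g')) ⁻¹' {a (g * g') x₀} ∩
        ((fun x => a g (g' • x)) ⁻¹' {a g (g' • x₀)} ∩ (a g') ⁻¹' {a g' x₀}) with hUdef
      have hx₀U : x₀ ∈ U := ⟨rfl, rfl, rfl⟩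
      have hUopen : IsOpen U :=
        (((ha _).isOpen_preimage _ (isOpen_discrete _))).inter
          ((((ha g).comp (hGcont g')).isOpen_preimage _ (isOpen_discrete _)).inter
            ((ha g').isOpen_preimage _ (isOpen_discrete _)))
      have hcU : ∀ x ∈ U, c x = c x₀ := by
        rintro x ⟨h1, h2, h3⟩
        simp only [Set.mem_preimage, Set.mem_singleton_iff] at h1 h2 h3
        simp only [hcdef, h1, h2, h3]
      have hop : IsOpen (φ '' U) := φ.isOpenMap U hUopen
      obtain ⟨y, hy⟩ := (hKfree (c x₀) hne).inter_open_nonempty _ hop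
        ⟨φ x₀, Set.mem_image_of_mem _ hx₀U⟩
      rcases hy with ⟨hy1, hy2⟩
      obtain ⟨x, hxU, rfl⟩ := hy1
      exact hy2 (by rw [← hcU x hxU]; exact key x)
    intro x
    have h := hcone x
    simp only [hcdef] at h
    exact (inv_mul_eq_one.mp h).symm ▸ rfl
  have ha1 : ∀ x : X, a 1 x = 1 := by
    intro x
    have h := cocycle 1 1 x
    simp only [one_mul, one_smul] at h
    exact (right_eq_mul.mp h)
  have keylist : ∀ l : List G, (∀ s ∈ l, s ∈ S) → ∀ y : X,
      wordLength T (a l.prod y) ≤ C * l.length := by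
    intro l
    induction l with
    | nil =>
      intro _ y
      have h0 : wordLength T (1 : K) ≤ ([] : List K).length :=
        wordLength_le (by simp) (by simp)
      simpa [ha1 y] using h0
    | cons s l ih =>
      intro h y
      have hco := cocycle s l.prod y
      have hs : s ∈ S := h s (by simp)
      have hl : ∀ z ∈ l, z ∈ S := fun z hz => h z (by simp [hz])
      calc wordLength T (a (s :: l).prod y)
          = wordLength T (a s (l.prod • y) * a l.prod y) := by rw [List.prod_cons, hco]
        _ ≤ wordLength T (a s (l.prod • y)) + wordLength T (a l.prod y) :=
            wordLength_mul_le hTsym hTgen _ _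
        _ ≤ C + C * l.length := Nat.add_le_add (hC _ s hs) (ih hl y)
        _ = C * (s :: l).length := by simp [List.length_cons]; ring
  intro x g₁ g₂
  have hco : a g₂ x = a (g₂ * g₁⁻¹) (g₁ • x) * a g₁ x := by
    have h := cocycle (g₂ * g₁⁻¹) g₁ x
    rwa [inv_mul_cancel_right] at h
  have heq : a g₂ x * (a g₁ x)⁻¹ = a (g₂ * g₁⁻¹) (g₁ • x) := by
    rw [hco, mul_inv_cancel_right]
  rw [heq]
  obtain ⟨l, h1, h2, h3⟩ := Nat.sInf_mem (wordLength_nonempty hSsym hSgen (g₂ * g₁⁻¹))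
  have hk := keylist l h1 (g₁ • x)
  rw [h2] at hk
  have hWL : wordLength S (g₂ * g₁⁻¹) = l.length := h3.symm
  rw [hWL]
  exact hk
end

section
/- Let α : D∞ ↷ X be a minimal continuous action of the infinite dihedral group D∞ = ⟨s⟩ ⋊ ⟨t⟩ on an infinite compact Hausdorff space X. Then α is topologically free, i.e., for every g ≠ e in D∞ the set {x ∈ X : gx ≠ x} is dense in X. -/
open DihedralGroup MulAction

private lemma dg_rr (i j : ℤ) : (r i : DihedralGroup 0) * r j = r (i + j) := rfl
private lemma dg_rs (i j : ℤ) : (r i : DihedralGroup 0) * sr j = sr (j - i) := rfl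
private lemma dg_sr_r (i j : ℤ) : (sr i : DihedralGroup 0) * r j = sr (i + j) := rfl
private lemma dg_one : (1 : DihedralGroup 0) = r (0 : ℤ) := rfl

private def dgIdx (k : ℤ) : DihedralGroup 0 → ℤ
  | r m => -(show ℤ from m)
  | sr m => k - (show ℤ from m)

set_option linter.unusedSectionVars false

private lemma dg_cases (g : DihedralGroup 0) : (∃ i : ℤ, g = r i) ∨ (∃ i : ℤ, g = sr i) := by
  rcases g with i | i
  · exact Or.inl ⟨i, rfl⟩
  · exact Or.inr ⟨i, rfl⟩

section aux

variable {X : Type*} [TopologicalSpace X] [CompactSpace X] [T2Space X] [Infinite X]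
  [MulAction (DihedralGroup 0) X]

private lemma dg_inv_smul {m : ℤ} {x : X} (h : (r m : DihedralGroup 0) • x = x) :
    (r (-m) : DihedralGroup 0) • x = x := by
  have h1 : (r (-m) : DihedralGroup 0) * r m = 1 := by
    rw [dg_rr, neg_add_cancel]; rfl
  calc (r (-m) : DihedralGroup 0) • x
      = (r (-m) : DihedralGroup 0) • ((r m : DihedralGroup 0) • x) := by rw [h]
    _ = ((r (-m) : DihedralGroup 0) * r m) • x := (mul_smul _ _ _).symm
    _ = x := by rw [h1, one_smul]

/-- If some nontrivial rotation acts trivially, the space can't be infinite (given minimality). -/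
private lemma dg_triv (hmin : ∀ x : X, Dense (MulAction.orbit (DihedralGroup 0) x))
    (m : ℤ) (hm : m ≠ 0) (htriv : ∀ x : X, (r m : DihedralGroup 0) • x = x) : False := by
  set p : ℤ := |m| with hp
  have hppos : 0 < p := abs_pos.mpr hm
  have htriv' : ∀ x : X, (r p : DihedralGroup 0) • x = x := by
    rcases abs_choice m with h | h
    · rw [hp, h]; exact htriv
    · rw [hp, h]; exact fun x => dg_inv_smul (htriv x)
  have hnegp : ∀ x : X, (r (-p) : DihedralGroup 0) • x = x :=
    fun x => dg_inv_smul (htriv' x)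
  have hq : ∀ (q : ℤ) (x : X), (r (p * q) : DihedralGroup 0) • x = x := by
    intro q
    induction q using Int.induction_on with
    | zero => intro x; rw [mul_zero, ← dg_one, one_smul]
    | succ q ih =>
        intro x
        have e : p * (q + 1) = p + p * q := by ring
        rw [e, ← dg_rr, mul_smul, ih, htriv']
    | pred q ih =>
        intro x
        have e : p * (-q - 1) = -p + p * (-q) := by ring
        rw [e, ← dg_rr, mul_smul, ih, hnegp]
  have x : X := Classical.arbitrary X
  have hmodr : ∀ i : ℤ, (r i : DihedralGroup 0) • x = (r (i % p) : DihedralGroup 0) • x := by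
    intro i
    have e : i % p + p * (i / p) = i := Int.emod_add_mul_ediv i p
    calc (r i : DihedralGroup 0) • x
        = (r (i % p + p * (i / p)) : DihedralGroup 0) • x := by rw [e]
      _ = (r (i % p) : DihedralGroup 0) • ((r (p * (i / p)) : DihedralGroup 0) • x) := by
          rw [← mul_smul, dg_rr]
      _ = (r (i % p) : DihedralGroup 0) • x := by rw [hq]
  have hmods : ∀ i : ℤ, (sr i : DihedralGroup 0) • x = (sr (i % p) : DihedralGroup 0) • x := by
    intro i
    have e : i % p + p * (i / p) = i := Int.emod_add_mul_ediv i p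
    calc (sr i : DihedralGroup 0) • x
        = (sr (i % p + p * (i / p)) : DihedralGroup 0) • x := by rw [e]
      _ = (sr (i % p) : DihedralGroup 0) • ((r (p * (i / p)) : DihedralGroup 0) • x) := by
          rw [← mul_smul, dg_sr_r]
      _ = (sr (i % p) : DihedralGroup 0) • x := by rw [hq]
  have hsub : MulAction.orbit (DihedralGroup 0) x ⊆
      (fun j : ℤ => (r j : DihedralGroup 0) • x) '' Set.Icc 0 (p - 1) ∪
      (fun j : ℤ => (sr j : DihedralGroup 0) • x) '' Set.Icc 0 (p - 1) := by
    rintro _ ⟨g, rfl⟩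
    have hmem : ∀ i : ℤ, i % p ∈ Set.Icc (0:ℤ) (p - 1) := by
      intro i
      refine ⟨Int.emod_nonneg i (ne_of_gt hppos), ?_⟩
      have := Int.emod_lt_of_pos i hppos
      omega
    rcases dg_cases g with ⟨i, rfl⟩ | ⟨i, rfl⟩
    · exact Or.inl ⟨i % p, hmem i, (hmodr i).symm⟩
    · exact Or.inr ⟨i % p, hmem i, (hmods i).symm⟩
  have hfin : (MulAction.orbit (DihedralGroup 0) x).Finite :=
    Set.Finite.subset (((Set.finite_Icc (0:ℤ) (p-1)).image _).union
      ((Set.finite_Icc (0:ℤ) (p-1)).image _)) hsub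
  have hclosed : IsClosed (MulAction.orbit (DihedralGroup 0) x) := hfin.isClosed
  have huniv : MulAction.orbit (DihedralGroup 0) x = Set.univ := by
    have := (hmin x).closure_eq
    rwa [hclosed.closure_eq] at this
  exact Set.infinite_univ (huniv ▸ hfin)

/-- No nontrivial rotation has a fixed point. -/
private lemma dg_fixR (hcont : ∀ g : DihedralGroup 0, Continuous fun x : X => g • x)
    (hmin : ∀ x : X, Dense (MulAction.orbit (DihedralGroup 0) x))
    (n : ℤ) (hn : n ≠ 0) (x : X) (hx : (r n : DihedralGroup 0) • x = x) : False := by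
  set F : Set X := {y : X | (r n : DihedralGroup 0) • y = y} with hF
  have hFclosed : IsClosed F := isClosed_eq (hcont _) continuous_id
  have hinv : ∀ (g : DihedralGroup 0) (y : X), y ∈ F → g • y ∈ F := by
    intro g y hy
    have hy' : (r n : DihedralGroup 0) • y = y := hy
    have hyneg : (r (-n) : DihedralGroup 0) • y = y := dg_inv_smul hy'
    rcases dg_cases g with ⟨m, rfl⟩ | ⟨m, rfl⟩
    · show (r n : DihedralGroup 0) • ((r m : DihedralGroup 0) • y) = (r m : DihedralGroup 0) • y
      rw [← mul_smul, dg_rr, add_comm, ← dg_rr, mul_smul, hy']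
    · show (r n : DihedralGroup 0) • ((sr m : DihedralGroup 0) • y) = (sr m : DihedralGroup 0) • y
      have e : (r n : DihedralGroup 0) * sr m = (sr m : DihedralGroup 0) * r (-n) := by
        rw [dg_rs, dg_sr_r]; ring_nf
      rw [← mul_smul, e, mul_smul, hyneg]
  have horb : MulAction.orbit (DihedralGroup 0) x ⊆ F := by
    rintro _ ⟨g, rfl⟩; exact hinv g x hx
  have hFuniv : ∀ y : X, (r n : DihedralGroup 0) • y = y := by
    intro y
    have h1 : closure (MulAction.orbit (DihedralGroup 0) x) ⊆ F :=
      closure_minimal horb hFclosed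
    have h2 : y ∈ closure (MulAction.orbit (DihedralGroup 0) x) := by
      rw [(hmin x).closure_eq]; trivial
    exact h1 h2
  exact dg_triv hmin n hn hFuniv

end aux

/-- A minimal continuous action of the infinite dihedral group on an infinite compact
Hausdorff space is topologically free. -/
theorem minimal_dihedral_action_topologically_free
    {X : Type*} [TopologicalSpace X] [CompactSpace X] [T2Space X] [Infinite X]
    [MulAction (DihedralGroup 0) X]
    (hcont : ∀ g : DihedralGroup 0, Continuous fun x : X => g • x)
    (hmin : ∀ x : X, Dense (MulAction.orbit (DihedralGroup 0) x)) :
    ∀ g : DihedralGroup 0, g ≠ 1 → Dense {x : X | g • x ≠ x} := by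
  intro g hg
  rcases dg_cases g with ⟨n, rfl⟩ | ⟨k, rfl⟩
  · -- rotation case: no fixed points at all
    have hn : n ≠ 0 := by
      intro h0
      exact hg (by rw [dg_one, h0])
    have : {x : X | (r n : DihedralGroup 0) • x ≠ x} = Set.univ := by
      ext x
      simp only [Set.mem_setOf_eq, Set.mem_univ, iff_true]
      intro hx
      exact dg_fixR hcont hmin n hn x hx
    rw [this]; exact dense_univ
  · -- reflection case
    rw [dense_iff_inter_open]
    intro U hU hUne
    by_contra hcon
    have hfix : ∀ x ∈ U, (sr k : DihedralGroup 0) • x = x := by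
      intro x hxU
      by_contra hne
      exact hcon ⟨x, hxU, hne⟩
    obtain ⟨u, hu⟩ := hUne
    have hcover : Set.univ ⊆ ⋃ g : DihedralGroup 0, (fun y => g • y) ⁻¹' U := by
      intro y _
      obtain ⟨z, hzU, g, rfl⟩ := (hmin y).inter_open_nonempty U hU ⟨u, hu⟩
      exact Set.mem_iUnion.mpr ⟨g, hzU⟩
    obtain ⟨S, hS⟩ := isCompact_univ.elim_finite_subcover _
      (fun g : DihedralGroup 0 => hU.preimage (hcont g)) hcover
    obtain ⟨M, hM⟩ := Infinite.exists_notMem_finset (S.image (dgIdx k))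
    have hmem : (r M : DihedralGroup 0) • u ∈ ⋃ g ∈ S, (fun y => g • y) ⁻¹' U :=
      hS (Set.mem_univ _)
    obtain ⟨g, hgS, hgU⟩ := Set.mem_iUnion₂.mp hmem
    have key : ∃ a : ℤ, a ≠ 0 ∧ (r a : DihedralGroup 0) • u ∈ U := by
      rcases dg_cases g with ⟨m, rfl⟩ | ⟨m, rfl⟩
      · refine ⟨m + M, ?_, ?_⟩
        · intro h0
          apply hM
          refine Finset.mem_image.mpr ⟨r m, hgS, ?_⟩
          show -m = M
          omega
        · have : (r m : DihedralGroup 0) • ((r M : DihedralGroup 0) • u) ∈ U := hgU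
          rwa [← mul_smul, dg_rr] at this
      · refine ⟨k - m - M, ?_, ?_⟩
        · intro h0
          apply hM
          refine Finset.mem_image.mpr ⟨sr m, hgS, ?_⟩
          show k - m = M
          omega
        · have h1 : (sr (m + M) : DihedralGroup 0) • u ∈ U := by
            have : (sr m : DihedralGroup 0) • ((r M : DihedralGroup 0) • u) ∈ U := hgU
            rwa [← mul_smul, dg_sr_r] at this
          have e : (sr (m + M) : DihedralGroup 0) = r (k - m - M) * sr k := by
            rw [dg_rs]; ring_nf
          rw [e, mul_smul, hfix u hu] at h1
          exact h1
    obtain ⟨a, ha, hvU⟩ := key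
    have h3 : (sr k : DihedralGroup 0) • ((r a : DihedralGroup 0) • u)
        = (r a : DihedralGroup 0) • u := hfix _ hvU
    have h4 : (r a : DihedralGroup 0) • u = (r (-a) : DihedralGroup 0) • u := by
      have e1 : (sr k : DihedralGroup 0) * r a = sr (k + a) := dg_sr_r k a
      have e2 : (r (-a) : DihedralGroup 0) * sr k = sr (k + a) := by
        rw [dg_rs]; ring_nf
      calc (r a : DihedralGroup 0) • u
          = (sr (k + a) : DihedralGroup 0) • u := by rw [← e1, mul_smul, h3]
        _ = (r (-a) : DihedralGroup 0) • ((sr k : DihedralGroup 0) • u) := by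
            rw [← mul_smul, e2]
        _ = (r (-a) : DihedralGroup 0) • u := by rw [hfix u hu]
    have h5 : (r ((2 * a : ℤ)) : DihedralGroup 0) • u = u := by
      have h6 := congrArg (fun y : X => (r a : DihedralGroup 0) • y) h4
      rw [← mul_smul, ← mul_smul, dg_rr, dg_rr] at h6
      have e3 : a + a = 2 * a := by ring
      have e4 : a + -a = (0 : ℤ) := by ring
      rw [e3, e4, ← dg_one, one_smul] at h6
      exact h6
    exact absurd h5 (fun h => dg_fixR hcont hmin (2 * a) (by omega) u h)
end

section
/- Let F be a finite group. Every automorphism Φ of the direct product F × ℤ has the form Φ(t, n) = (ε(t)·g^n, ±n) for some automorphism ε ∈ Aut(F) and some central element g ∈ C(F), where the sign ± is fixed independent of (t, n). -/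
private lemma mult_int_eq_one_of_finOrder {x : Multiplicative ℤ}
    (h : IsOfFinOrder x) : x = 1 := by
  obtain ⟨n, hn, hx⟩ := isOfFinOrder_iff_pow_eq_one.mp h
  have h2 : (n : ℤ) * x.toAdd = 0 := by
    have := congrArg Multiplicative.toAdd hx
    simpa [toAdd_pow, nsmul_eq_mul] using this
  have h3 : x.toAdd = 0 := by
    rcases mul_eq_zero.mp h2 with h | h
    · exact absurd h (by exact_mod_cast hn.ne')
    · exact h
  exact toAdd_eq_zero.mp h3

/-- Every automorphism `Φ` of `F × ℤ` (with `F` a finite group) has the form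
`Φ(t, n) = (ε(t)·gⁿ, ±n)` for some `ε ∈ Aut(F)` and central `g ∈ C(F)`, with the
sign fixed. -/
theorem aut_of_finite_times_int
    {F : Type*} [Group F] [Finite F]
    (Φ : MulAut (F × Multiplicative ℤ)) :
    ∃ ε : MulAut F, ∃ g ∈ Subgroup.center F,
      (∀ (t : F) (n : ℤ),
        Φ (t, Multiplicative.ofAdd n) = (ε t * g ^ n, Multiplicative.ofAdd n)) ∨
      (∀ (t : F) (n : ℤ),
        Φ (t, Multiplicative.ofAdd n) = (ε t * g ^ n, Multiplicative.ofAdd (-n))) := by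
  have hzpow : ∀ n : ℤ, (((1 : F), Multiplicative.ofAdd (1 : ℤ)) : F × Multiplicative ℤ) ^ n
      = (1, Multiplicative.ofAdd n) := by
    intro n
    have h1 : ((((1 : F), Multiplicative.ofAdd (1 : ℤ)) : F × Multiplicative ℤ) ^ n)
        = ((1 : F) ^ n, Multiplicative.ofAdd (1 : ℤ) ^ n) := rfl
    rw [h1, one_zpow, ← Int.ofAdd_mul, one_mul]
  have hdecomp : ∀ (t : F) (n : ℤ),
      ((t, Multiplicative.ofAdd n) : F × Multiplicative ℤ)
        = (t, 1) * ((1 : F), Multiplicative.ofAdd (1 : ℤ)) ^ n := by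
    intro t n
    rw [hzpow n]
    ext <;> simp
  -- torsion elements have second coordinate 1 after applying any automorphism
  have htor : ∀ (Ψ : MulAut (F × Multiplicative ℤ)) (t : F), (Ψ (t, 1)).2 = 1 := by
    intro Ψ t
    apply mult_int_eq_one_of_finOrder
    have h1 : IsOfFinOrder ((t, (1 : Multiplicative ℤ)) : F × Multiplicative ℤ) :=
      IsOfFinOrder.prod_mk (isOfFinOrder_of_finite t) IsOfFinOrder.one
    have h2 : IsOfFinOrder (Ψ (t, 1)) := Ψ.toMonoidHom.isOfFinOrder h1
    exact ((MonoidHom.snd F (Multiplicative ℤ)).isOfFinOrder h2)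
  -- general formula for the second coordinate
  have hsnd : ∀ (Ψ : MulAut (F × Multiplicative ℤ)) (t : F) (n : ℤ),
      (Ψ (t, Multiplicative.ofAdd n)).2
        = (Ψ (1, Multiplicative.ofAdd (1 : ℤ))).2 ^ n := by
    intro Ψ t n
    rw [hdecomp t n, map_mul, map_zpow, Prod.snd_mul, htor Ψ t, one_mul]
    rfl
  set d : ℤ := (Φ (1, Multiplicative.ofAdd (1 : ℤ))).2.toAdd with hd
  set d' : ℤ := (Φ.symm (1, Multiplicative.ofAdd (1 : ℤ))).2.toAdd with hd'
  have hdd' : d' * d = 1 := by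
    have h1 : (Φ.symm (Φ (1, Multiplicative.ofAdd (1 : ℤ)))).2
        = Multiplicative.ofAdd (1 : ℤ) := by rw [Φ.symm_apply_apply]
    have h2 : Φ (1, Multiplicative.ofAdd (1 : ℤ))
        = ((Φ (1, Multiplicative.ofAdd (1 : ℤ))).1, Multiplicative.ofAdd d) := by
      ext <;> simp [hd]
    rw [h2] at h1
    rw [hsnd Φ.symm _ d] at h1
    have h3 := congrArg Multiplicative.toAdd h1
    rw [toAdd_zpow] at h3
    simpa [smul_eq_mul, mul_comm] using h3
  have hdpm : d = 1 ∨ d = -1 :=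
    Int.isUnit_iff.mp (IsUnit.of_mul_eq_one (a := d) d' (by linarith))
  -- the automorphism ε
  have hεmul : ∀ t s : F, (Φ ((t * s : F), 1)).1 = (Φ (t, 1)).1 * (Φ (s, 1)).1 := by
    intro t s
    have h : ((t * s : F), (1 : Multiplicative ℤ))
        = ((t : F), (1 : Multiplicative ℤ)) * (s, 1) := by ext <;> simp
    rw [h, map_mul, Prod.fst_mul]
  let εh : F →* F :=
    { toFun := fun t => (Φ (t, 1)).1
      map_one' := by show (Φ 1).1 = 1; simp
      map_mul' := hεmul }
  have hεinj : Function.Injective εh := by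
    rw [injective_iff_map_eq_one]
    intro t ht
    have h1 : Φ (t, 1) = 1 := by
      ext
      · exact ht
      · simpa using htor Φ t
    have := Φ.injective (h1.trans (map_one Φ.toMonoidHom).symm)
    exact (Prod.mk.injEq _ _ _ _).mp this |>.1
  have hεbij : Function.Bijective εh := Finite.injective_iff_bijective.mp hεinj
  set ε : MulAut F := MulEquiv.ofBijective εh hεbij with hε
  set g : F := (Φ (1, Multiplicative.ofAdd (1 : ℤ))).1 with hg
  have hεapp : ∀ t, ε t = (Φ (t, 1)).1 := fun t => rfl
  have hgc : g ∈ Subgroup.center F := by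
    rw [Subgroup.mem_center_iff]
    intro a
    obtain ⟨t, rfl⟩ := hεbij.surjective a
    have hcomm : ((t : F), (1 : Multiplicative ℤ)) * (1, Multiplicative.ofAdd (1 : ℤ))
        = ((1 : F), Multiplicative.ofAdd (1 : ℤ)) * (t, 1) := by ext <;> simp
    have h2 := congrArg (fun x => (Φ x).1) hcomm
    simp only [map_mul, Prod.fst_mul] at h2
    exact h2
  refine ⟨ε, g, hgc, ?_⟩
  have hkey : ∀ (t : F) (n : ℤ),
      Φ (t, Multiplicative.ofAdd n) = (ε t * g ^ n, Multiplicative.ofAdd (d * n)) := by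
    intro t n
    ext
    · rw [hdecomp t n, map_mul, map_zpow, Prod.fst_mul]
      rfl
    · rw [hsnd Φ t n,
        show (Φ (1, Multiplicative.ofAdd (1 : ℤ))).2 = Multiplicative.ofAdd d from rfl,
        ← Int.ofAdd_mul]
  rcases hdpm with h | h
  · left
    intro t n
    rw [hkey t n, h, one_mul]
  · right
    intro t n
    rw [hkey t n, h]
    norm_num
end

section
/- Let α : ℤ ↷ X be a minimal free action on a compact Hausdorff space, F a finite group, and c, c' : ℤ × X → F two continuous cocycles. Define skew product actions of F × ℤ on X × F by (f, n)(x, f') := (α_n(x), c(n,x)·f'·f⁻¹) and similarly with c'. Then the map θ : (F × ℤ) × (X × F) → F × ℤ given by θ((t, n), (x, f)) = (t·f⁻¹·c(n,x)⁻¹·c'(n,x)·f, n) is a continuous cocycle with respect to the first skew product action, i.e., θ(g₁g₂, p) = θ(g₁, g₂·p)·θ(g₂, p) for all g₁, g₂ ∈ F × ℤ and p ∈ X × F. -/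
/-- For a minimal free `ℤ`-action `α` on a compact Hausdorff space and two continuous
cocycles `c, c' : ℤ × X → F` into a finite group, the map
`θ((t,n),(x,f)) = (t·f⁻¹·c(n,x)⁻¹·c'(n,x)·f, n)` is a continuous cocycle with respect
to the skew product action `(f,n)·(x,f') = (α_n x, c(n,x)·f'·f⁻¹)` of `F × ℤ` on `X × F`. -/
theorem theta_is_cocycle_for_skew_product
    {X : Type*} [TopologicalSpace X] [CompactSpace X] [T2Space X]
    {F : Type*} [Group F] [Finite F] [TopologicalSpace F] [DiscreteTopology F]
    (α : ℤ → X → X) (hcont : ∀ n, Continuous (α n))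
    (hzero : ∀ x, α 0 x = x) (hadd : ∀ m n x, α (m + n) x = α m (α n x))
    (hmin : ∀ x : X, Dense (Set.range fun n : ℤ => α n x))
    (hfree : ∀ (n : ℤ) (x : X), n ≠ 0 → α n x ≠ x)
    (c c' : ℤ → X → F)
    (hccont : ∀ n, Continuous (c n)) (hc'cont : ∀ n, Continuous (c' n))
    (hccoc : ∀ m n x, c (m + n) x = c m (α n x) * c n x)
    (hc'coc : ∀ m n x, c' (m + n) x = c' m (α n x) * c' n x)
    (act : F × Multiplicative ℤ → X × F → X × F)
    (hact : ∀ (f : F) (n : ℤ) (x : X) (f' : F),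
      act (f, Multiplicative.ofAdd n) (x, f') = (α n x, c n x * f' * f⁻¹))
    (θ : F × Multiplicative ℤ → X × F → F × Multiplicative ℤ)
    (hθ : ∀ (t : F) (n : ℤ) (x : X) (f : F),
      θ (t, Multiplicative.ofAdd n) (x, f) =
        (t * f⁻¹ * (c n x)⁻¹ * c' n x * f, Multiplicative.ofAdd n)) :
    (∀ g : F × Multiplicative ℤ, Continuous (θ g)) ∧
    (∀ (g₁ g₂ : F × Multiplicative ℤ) (p : X × F),
      θ (g₁ * g₂) p = θ g₁ (act g₂ p) * θ g₂ p) := by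
  constructor
  · rintro ⟨t, n⟩
    have hfun : θ (t, n) = fun p : X × F =>
        ((t * p.2⁻¹ * (c n.toAdd p.1)⁻¹ * c' n.toAdd p.1 * p.2 : F),
          (n : Multiplicative ℤ)) := by
      funext p
      exact hθ t n.toAdd p.1 p.2
    rw [hfun]
    refine Continuous.prodMk ?_ continuous_const
    exact ((((continuous_const.mul continuous_snd.inv).mul
      (((hccont n.toAdd).comp continuous_fst).inv)).mul
      ((hc'cont n.toAdd).comp continuous_fst)).mul continuous_snd)
  · rintro ⟨t₁, n₁⟩ ⟨t₂, n₂⟩ ⟨x, f⟩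
    have e₁ : n₁ = Multiplicative.ofAdd n₁.toAdd := rfl
    have e₂ : n₂ = Multiplicative.ofAdd n₂.toAdd := rfl
    have h1 : ((t₁, n₁) * (t₂, n₂) : F × Multiplicative ℤ)
        = (t₁ * t₂, Multiplicative.ofAdd (n₁.toAdd + n₂.toAdd)) := rfl
    rw [h1, hθ]
    rw [e₁, e₂, hact t₂ n₂.toAdd x f, hθ, hθ, hccoc, hc'coc, Prod.mk_mul_mk]
    ext
    · simp only [toAdd_ofAdd]
      group
    · rfl
end

section
/- Let (n_i) be a strictly increasing sequence of positive integers with n_i | n_{i+1}, let X = lim← ℤ/n_iℤ be the odometer space with the odometer ℤ-action T, and let p be a prime with sup_i ord_p(n_i) = ∞ (where ord_p(m) is the largest k with p^k | m). Then every continuous cocycle c : ℤ × X → ℤ/pℤ is a coboundary. -/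
instance (m : ℕ) : TopologicalSpace (ZMod m) := ⊥

/-- The odometer space `lim← ℤ/n_iℤ`. -/
def OdometerSpace (n : ℕ → ℕ) (h : ∀ i, n i ∣ n (i + 1)) : Type :=
  {x : (i : ℕ) → ZMod (n i) // ∀ i, ZMod.castHom (h i) (ZMod (n i)) (x (i + 1)) = x i}

instance (n : ℕ → ℕ) (h : ∀ i, n i ∣ n (i + 1)) : TopologicalSpace (OdometerSpace n h) := by
  unfold OdometerSpace; infer_instance

/-- The odometer `ℤ`-action: addition of `m` in every coordinate. -/
def odometer (n : ℕ → ℕ) (h : ∀ i, n i ∣ n (i + 1)) (m : ℤ)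
    (x : OdometerSpace n h) : OdometerSpace n h :=
  ⟨fun i => x.1 i + (m : ZMod (n i)), fun i => by
    rw [map_add, x.2 i, map_intCast]⟩


instance (m : ℕ) : DiscreteTopology (ZMod m) := ⟨rfl⟩

namespace OdoAux

variable {n : ℕ → ℕ} {h : ∀ i, n i ∣ n (i + 1)}

lemma odo_coord (m : ℤ) (x : OdometerSpace n h) (i : ℕ) :
    (odometer n h m x).1 i = x.1 i + (m : ZMod (n i)) := rfl

lemma odo_zero (x : OdometerSpace n h) : odometer n h 0 x = x := by
  apply Subtype.ext; funext i; simp [odo_coord]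

lemma odo_add (a b : ℤ) (x : OdometerSpace n h) :
    odometer n h a (odometer n h b x) = odometer n h (a + b) x := by
  apply Subtype.ext; funext i; simp [odo_coord]; ring

lemma dvd_of_le (h : ∀ i, n i ∣ n (i + 1)) : ∀ {i j : ℕ}, i ≤ j → n i ∣ n j := by
  intro i j hij
  induction j with
  | zero => simpa [Nat.le_zero.mp hij] using dvd_refl (n 0)
  | succ k ih =>
    rcases Nat.lt_or_ge i (k+1) with hk | hk
    · exact (ih (Nat.lt_succ_iff.mp hk)).trans (h k)
    · have : i = k + 1 := le_antisymm hij hk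
      simp [this]

lemma coord_cast (x : OdometerSpace n h) : ∀ {i j : ℕ} (hij : i ≤ j),
    ZMod.castHom (dvd_of_le h hij) (ZMod (n i)) (x.1 j) = x.1 i := by
  intro i j hij
  induction j with
  | zero =>
    have : i = 0 := Nat.le_zero.mp hij
    subst this; simp [ZMod.castHom_apply, ZMod.cast_id]
  | succ k ih =>
    rcases Nat.lt_or_ge i (k+1) with hk | hk
    · have hik : i ≤ k := Nat.lt_succ_iff.mp hk
      have := x.2 k
      calc ZMod.castHom (dvd_of_le h hij) (ZMod (n i)) (x.1 (k+1))
          = ZMod.castHom (dvd_of_le h hik) (ZMod (n i))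
              (ZMod.castHom (h k) (ZMod (n k)) (x.1 (k+1))) := by
            rw [← RingHom.comp_apply, ZMod.castHom_comp]
        _ = x.1 i := by rw [x.2 k]; exact ih hik
    · have : i = k + 1 := le_antisymm hij hk
      subst this; simp [ZMod.castHom_apply, ZMod.cast_id]

end OdoAux

namespace OdoAux

variable {n : ℕ → ℕ} {h : ∀ i, n i ∣ n (i + 1)}

lemma coord_continuous (j : ℕ) :
    Continuous (fun x : OdometerSpace n h => x.1 j) :=
  (continuous_apply j).comp continuous_subtype_val

lemma compactSpace (hpos : ∀ i, 0 < n i) : CompactSpace (OdometerSpace n h) := by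
  haveI : ∀ i, NeZero (n i) := fun i => ⟨(hpos i).ne'⟩
  have hclosed : IsClosed {x : (i : ℕ) → ZMod (n i) |
      ∀ i, ZMod.castHom (h i) (ZMod (n i)) (x (i + 1)) = x i} := by
    have : {x : (i : ℕ) → ZMod (n i) |
        ∀ i, ZMod.castHom (h i) (ZMod (n i)) (x (i + 1)) = x i} =
        ⋂ i, {x | ZMod.castHom (h i) (ZMod (n i)) (x (i + 1)) = x i} := by
      ext x; simp
    rw [this]
    refine isClosed_iInter fun i => isClosed_eq ?_ (continuous_apply i)
    exact (continuous_of_discreteTopology).comp (continuous_apply (i+1))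
  exact isCompact_iff_compactSpace.mp hclosed.isCompact

/-- A continuous map from the odometer to a discrete space factors through a coordinate. -/
lemma exists_factor (hpos : ∀ i, 0 < n i) {β : Type*} [TopologicalSpace β] [DiscreteTopology β]
    (f : OdometerSpace n h → β) (hf : Continuous f) :
    ∃ i : ℕ, ∀ x y : OdometerSpace n h, x.1 i = y.1 i → f x = f y := by
  haveI := compactSpace (h := h) hpos
  -- for each x, a coordinate controlling f near x
  have key : ∀ x : OdometerSpace n h, ∃ i : ℕ,
      ∀ y : OdometerSpace n h, y.1 i = x.1 i → f y = f x := by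
    intro x
    have hopen : IsOpen (f ⁻¹' {f x}) := (isOpen_discrete _).preimage hf
    replace hopen := isOpen_induced_iff.mp hopen
    obtain ⟨t, ht, hteq⟩ := hopen
    have hxt : x.1 ∈ t := by
      have : x ∈ f ⁻¹' {f x} := rfl
      rw [← hteq] at this; exact this
    obtain ⟨I, u, hIu, hsub⟩ := isOpen_pi_iff.mp ht x.1 hxt
    rcases I.eq_empty_or_nonempty with hI | hI
    · refine ⟨0, fun y _ => ?_⟩
      have : y.1 ∈ (↑I : Set ℕ).pi u := by subst hI; simp
      have : y ∈ f ⁻¹' {f x} := by rw [← hteq]; exact hsub this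
      exact this
    · refine ⟨I.max' hI, fun y hy => ?_⟩
      have : y.1 ∈ (↑I : Set ℕ).pi u := by
        intro a haI
        have hale : a ≤ I.max' hI := I.le_max' a haI
        have : y.1 a = x.1 a := by
          rw [← coord_cast y hale, ← coord_cast x hale, hy]
        rw [this]
        exact (hIu a haI).2
      have : y ∈ f ⁻¹' {f x} := by rw [← hteq]; exact hsub this
      exact this
  choose ix hix using key
  -- compactness: finitely many cylinders cover
  have hcover : (Set.univ : Set (OdometerSpace n h)) ⊆
      ⋃ x : OdometerSpace n h, {y | y.1 (ix x) = x.1 (ix x)} := by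
    intro y _
    exact Set.mem_iUnion.mpr ⟨y, rfl⟩
  obtain ⟨s, hs⟩ := isCompact_univ.elim_finite_subcover
    (fun x : OdometerSpace n h => {y : OdometerSpace n h | y.1 (ix x) = x.1 (ix x)})
    (fun x => by
      have ho : IsOpen ((fun y : OdometerSpace n h => y.1 (ix x)) ⁻¹' {x.1 (ix x)}) :=
        (isOpen_discrete _).preimage (coord_continuous _)
      exact ho) hcover
  refine ⟨s.sup ix, fun x y hxy => ?_⟩
  obtain ⟨z, hzs, hz⟩ := by
    have := hs (Set.mem_univ x)
    simpa using this
  have hle : ix z ≤ s.sup ix := Finset.le_sup hzs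
  have hyz : y.1 (ix z) = z.1 (ix z) := by
    have : y.1 (ix z) = x.1 (ix z) := by
      rw [← coord_cast y hle, ← coord_cast x hle, hxy]
    rw [this, hz]
  rw [hix z x hz, hix z y hyz]

end OdoAux

namespace OdoAux

/-- Sum of a periodic function over `q` full periods vanishes weighting by `q`. -/
lemma sum_periodic {M : Type*} [AddCommMonoid M] (G : ℕ → M) (r : ℕ)
    (hG : ∀ t, G t = G (t % r)) (q : ℕ) :
    ∑ t ∈ Finset.range (q * r), G t = q • ∑ t ∈ Finset.range r, G t := by
  induction q with
  | zero => simp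
  | succ m ih =>
    have : (m + 1) * r = m * r + r := by ring
    rw [this, Finset.sum_range_add, ih, succ_nsmul]
    congr 1
    refine Finset.sum_congr rfl fun t ht => ?_
    rw [hG (m * r + t), Nat.add_comm, Nat.add_mul_mod_self_right, ← hG t]

end OdoAux


/-- If `sup_i ord_p(n_i) = ∞` then every continuous `ℤ/pℤ`-valued cocycle over the
odometer `lim← ℤ/n_iℤ` is a coboundary. -/
theorem odometer_cocycle_coboundary_of_unbounded_valuation
    (n : ℕ → ℕ) (hpos : ∀ i, 0 < n i) (hmono : StrictMono n)
    (h : ∀ i, n i ∣ n (i + 1))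
    (p : ℕ) (hp : p.Prime) (hord : ∀ N : ℕ, ∃ i, p ^ N ∣ n i)
    (c : ℤ → OdometerSpace n h → ZMod p)
    (hccont : ∀ m, Continuous (c m))
    (hcoc : ∀ (k m : ℤ) (x : OdometerSpace n h),
      c (k + m) x = c k (odometer n h m x) + c m x) :
    ∃ L : OdometerSpace n h → ZMod p, Continuous L ∧
      ∀ (m : ℤ) (x : OdometerSpace n h), c m x = L (odometer n h m x) - L x := by
  classical
  haveI : ∀ i, NeZero (n i) := fun i => ⟨(hpos i).ne'⟩
  haveI : Fact p.Prime := ⟨hp⟩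
  set f : OdometerSpace n h → ZMod p := c 1 with hfdef
  obtain ⟨i, hfac⟩ := OdoAux.exists_factor hpos f (hccont 1)
  -- choose a big coordinate j
  obtain ⟨j0, hj0⟩ := hord (padicValNat p (n i) + 1)
  set j := max i j0 with hjdef
  have hij : i ≤ j := le_max_left _ _
  have hpj : p ^ (padicValNat p (n i) + 1) ∣ n j :=
    hj0.trans (OdoAux.dvd_of_le h (le_max_right _ _))
  have hnij : n i ∣ n j := OdoAux.dvd_of_le h hij
  set q := n j / n i with hqdef
  have hqq : n j = n i * q := (Nat.mul_div_cancel' hnij).symm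
  have hq0 : q ≠ 0 := by
    intro h0; rw [h0, Nat.mul_zero] at hqq; exact (hpos j).ne' hqq
  have hpq : p ∣ q := by
    by_contra hnd
    have h1 : padicValNat p (n j) = padicValNat p (n i) + padicValNat p q := by
      rw [hqq, padicValNat.mul (hpos i).ne' hq0]
    have h2 : padicValNat p q = 0 := padicValNat.eq_zero_of_not_dvd hnd
    have h3 : padicValNat p (n i) + 1 ≤ padicValNat p (n j) :=
      ((padicValNat_dvd_iff _ _).mp hpj).resolve_left (hpos j).ne'
    omega
  have h2j : 1 < n j :=
    lt_of_lt_of_le hp.one_lt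
      (Nat.le_of_dvd (hpos j) ((dvd_pow_self p (Nat.succ_ne_zero _)).trans hpj))
  haveI : Fact (1 < n j) := ⟨h2j⟩
  -- f depends only on coordinate j
  have hcoordi : ∀ x y : OdometerSpace n h, x.1 j = y.1 j → x.1 i = y.1 i := by
    intro x y e
    rw [← OdoAux.coord_cast x hij, ← OdoAux.coord_cast y hij, e]
  -- the transfer function
  set v : OdometerSpace n h → ℕ := fun x => (x.1 j).val with hvdef
  set L : OdometerSpace n h → ZMod p :=
    fun x => ∑ t ∈ Finset.range (v x), f (odometer n h ((t : ℤ) - (v x : ℤ)) x) with hLdef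
  -- full-cycle sums vanish
  have hcycle : ∀ z : OdometerSpace n h, z.1 j = 0 →
      ∑ t ∈ Finset.range (n j), f (odometer n h (t : ℤ) z) = 0 := by
    intro z hz
    have hzi : z.1 i = 0 := by
      rw [← OdoAux.coord_cast z hij, hz, map_zero]
    set G : ℕ → ZMod p := fun t => f (odometer n h (t : ℤ) z) with hGdef
    have hGper : ∀ t, G t = G (t % n i) := by
      intro t
      refine hfac _ _ ?_
      show (odometer n h (t : ℤ) z).1 i = (odometer n h ((t % n i : ℕ) : ℤ) z).1 i
      rw [OdoAux.odo_coord, OdoAux.odo_coord, hzi]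
      push_cast
      ring
    have : ∑ t ∈ Finset.range (n j), G t = q • ∑ t ∈ Finset.range (n i), G t := by
      have : n j = q * n i := by rw [hqq]; ring
      rw [this, OdoAux.sum_periodic G (n i) hGper q]
    rw [show (∑ t ∈ Finset.range (n j), f (odometer n h (t : ℤ) z)) =
        ∑ t ∈ Finset.range (n j), G t from rfl, this]
    have : (q : ZMod p) = 0 := (ZMod.natCast_eq_zero_iff q p).mpr hpq
    rw [nsmul_eq_mul, this, zero_mul]
  -- value of x's coordinate j as a cast
  have hvcast : ∀ x : OdometerSpace n h, ((v x : ℕ) : ZMod (n j)) = x.1 j :=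
    fun x => ZMod.natCast_rightInverse (x.1 j)
  have hvT : ∀ x : OdometerSpace n h, v (odometer n h 1 x) = (v x + 1) % n j := by
    intro x
    show ((odometer n h 1 x).1 j).val = _
    rw [OdoAux.odo_coord]
    push_cast
    rw [ZMod.val_add, ZMod.val_one]
  -- the key step
  have hstep : ∀ x, L (odometer n h 1 x) = L x + f x := by
    intro x
    have hvlt : v x < n j := ZMod.val_lt _
    rcases Nat.lt_or_ge (v x + 1) (n j) with hlt | hge
    · -- no wrap
      have hv1 : v (odometer n h 1 x) = v x + 1 := by rw [hvT x, Nat.mod_eq_of_lt hlt]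
      have hterm : ∀ t : ℕ,
          odometer n h ((t : ℤ) - ((v x + 1 : ℕ) : ℤ)) (odometer n h 1 x)
          = odometer n h ((t : ℤ) - (v x : ℤ)) x := by
        intro t
        rw [OdoAux.odo_add]
        congr 1
        push_cast; ring
      calc L (odometer n h 1 x)
          = ∑ t ∈ Finset.range (v x + 1), f (odometer n h ((t : ℤ) - (v x : ℤ)) x) := by
            rw [hLdef]
            simp only [hv1]
            refine Finset.sum_congr rfl fun t _ => ?_
            rw [← hterm t]
        _ = L x + f x := by
            rw [Finset.sum_range_succ, hLdef]
            congr 1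
            rw [sub_self, OdoAux.odo_zero]
    · -- wrap around
      have hv1 : v x + 1 = n j := le_antisymm hvlt hge
      have hvT0 : v (odometer n h 1 x) = 0 := by
        rw [hvT x, hv1, Nat.mod_self]
      have hLT0 : L (odometer n h 1 x) = 0 := by
        rw [hLdef]; simp only [hvT0]; simp
      set z := odometer n h (-(v x : ℤ)) x with hzdef
      have hzj : z.1 j = 0 := by
        rw [hzdef, OdoAux.odo_coord]
        push_cast
        rw [hvcast x]
        ring
      have hterm : ∀ t : ℕ, odometer n h (t : ℤ) z = odometer n h ((t : ℤ) - (v x : ℤ)) x := by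
        intro t
        rw [hzdef, OdoAux.odo_add, show (t : ℤ) + -(v x : ℤ) = (t : ℤ) - (v x : ℤ) by ring]
      have hsum : L x + f x = ∑ t ∈ Finset.range (n j), f (odometer n h (t : ℤ) z) := by
        rw [← hv1, Finset.sum_range_succ, hLdef]
        congr 1
        · refine (Finset.sum_congr rfl fun t _ => ?_).symm
          rw [hterm t]
        · rw [hterm (v x), sub_self, OdoAux.odo_zero]
      rw [hLT0, hsum, hcycle z hzj]
  have hf_cob : ∀ x, f x = L (odometer n h 1 x) - L x := by
    intro x; rw [hstep x]; ring
  -- continuity of L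
  have hLfac : ∀ x y : OdometerSpace n h, x.1 j = y.1 j → L x = L y := by
    intro x y e
    have hv : v x = v y := by show (x.1 j).val = (y.1 j).val; rw [e]
    rw [hLdef]
    simp only [hv]
    refine Finset.sum_congr rfl fun t _ => ?_
    refine hfac _ _ ?_
    rw [OdoAux.odo_coord, OdoAux.odo_coord, hcoordi x y e]
  have hLcont : Continuous L := by
    have hfactor : Function.FactorsThrough L (fun x : OdometerSpace n h => x.1 j) :=
      fun a b hab => hLfac a b hab
    have heq : L = (Function.extend (fun x : OdometerSpace n h => x.1 j) L 0) ∘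
        (fun x => x.1 j) := by
      funext x
      exact (hfactor.extend_apply 0 x).symm
    rw [heq]
    exact continuous_of_discreteTopology.comp (OdoAux.coord_continuous j)
  refine ⟨L, hLcont, ?_⟩
  have hc0 : ∀ x, c 0 x = 0 := by
    intro x
    have h0 := hcoc 0 0 x
    rw [OdoAux.odo_zero, add_zero] at h0
    exact left_eq_add.mp h0
  intro m
  induction m using Int.induction_on with
  | zero => intro x; rw [hc0, OdoAux.odo_zero, sub_self]
  | succ k ih =>
    intro x
    have h1 := hcoc k 1 x
    rw [ih (odometer n h 1 x), OdoAux.odo_add] at h1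
    rw [h1, ← hfdef, hf_cob x]
    ring
  | pred k ih =>
    intro x
    set y := odometer n h (-1) x with hydef
    have hy1 : odometer n h 1 y = x := by
      rw [hydef, OdoAux.odo_add]
      norm_num
      exact OdoAux.odo_zero x
    have h1 := hcoc (-(k : ℤ) - 1) 1 y
    rw [hy1] at h1
    have h2 : (-(k : ℤ) - 1 + 1) = -(k : ℤ) := by ring
    rw [h2] at h1
    have h3 : c (-(k : ℤ) - 1) x = c (-(k : ℤ)) y - c 1 y := by
      rw [h1]; ring
    have h4 : odometer n h (-(k : ℤ)) y = odometer n h (-(k : ℤ) - 1) x := by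
      rw [hydef, OdoAux.odo_add,
        show (-(k : ℤ)) + -1 = -(k : ℤ) - 1 by ring]
    rw [h3, ih y, ← hfdef, hf_cob y, hy1, h4, hydef]
    ring
end

section
/- Let (n_i) be a strictly increasing sequence of positive integers with n_i | n_{i+1} and n_i → ∞, let X = lim← ℤ/n_iℤ be the odometer and p a prime with sup_i ord_p(n_i) < ∞. Then there exists a continuous cocycle c : ℤ × X → ℤ/pℤ for the odometer action that is not a coboundary. -/
lemma continuous_coord (n : ℕ → ℕ) (h : ∀ i, n i ∣ n (i + 1)) (i : ℕ) :
    Continuous (fun x : OdometerSpace n h => x.1 i) :=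
  (continuous_apply i).comp continuous_subtype_val

/-- Auxiliary "remainder" function: the `i0`-th coordinate, reduced mod `D`, as a natural. -/
def rFun (n : ℕ → ℕ) (h : ∀ i, n i ∣ n (i + 1)) (i0 D : ℕ) (x : OdometerSpace n h) : ℕ :=
  (x.1 i0).val % D

lemma odometer_comp (n : ℕ → ℕ) (h : ∀ i, n i ∣ n (i + 1)) (k m : ℤ) (x : OdometerSpace n h) :
    odometer n h k (odometer n h m x) = odometer n h (k + m) x := by
  apply Subtype.ext
  funext i
  show x.1 i + (m : ZMod (n i)) + (k : ZMod (n i)) = x.1 i + ((k + m : ℤ) : ZMod (n i))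
  push_cast
  ring

lemma rFun_cast (n : ℕ → ℕ) (h : ∀ i, n i ∣ n (i + 1)) (i0 D : ℕ)
    (hne : NeZero (n i0)) (hD : D ∣ n i0) (m : ℤ) (x : OdometerSpace n h) :
    ((rFun n h i0 D (odometer n h m x) : ℕ) : ZMod D) =
      ((rFun n h i0 D x : ℕ) : ZMod D) + (m : ZMod D) := by
  show (((x.1 i0 + (m : ZMod (n i0))).val % D : ℕ) : ZMod D) =
    (((x.1 i0).val % D : ℕ) : ZMod D) + (m : ZMod D)
  rw [ZMod.natCast_mod, ZMod.natCast_mod, ZMod.natCast_val, ZMod.natCast_val,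
    ← ZMod.castHom_apply (h := hD), ← ZMod.castHom_apply (h := hD), map_add, map_intCast]

lemma rFun_dvd (n : ℕ → ℕ) (h : ∀ i, n i ∣ n (i + 1)) (i0 D : ℕ)
    (hne : NeZero (n i0)) (hD : D ∣ n i0) (m : ℤ) (x : OdometerSpace n h) :
    (D : ℤ) ∣ ((rFun n h i0 D x : ℤ) + m - rFun n h i0 D (odometer n h m x)) := by
  rw [← ZMod.intCast_zmod_eq_zero_iff_dvd]
  push_cast
  rw [rFun_cast n h i0 D hne hD m x]
  push_cast
  ring

/-- If `sup_i ord_p(n_i) < ∞` (and `n_i → ∞`), then there is a continuous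
`ℤ/pℤ`-valued cocycle over the odometer `lim← ℤ/n_iℤ` which is not a coboundary. -/
theorem odometer_cocycle_not_coboundary_of_bounded_valuation
    (n : ℕ → ℕ) (hpos : ∀ i, 0 < n i) (hmono : StrictMono n)
    (htop : Filter.Tendsto n Filter.atTop Filter.atTop)
    (h : ∀ i, n i ∣ n (i + 1))
    (p : ℕ) (hp : p.Prime) (hord : ∃ N : ℕ, ∀ i, ¬ p ^ (N + 1) ∣ n i) :
    ∃ c : ℤ → OdometerSpace n h → ZMod p,
      (∀ m, Continuous (c m)) ∧
      (∀ (k m : ℤ) (x : OdometerSpace n h),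
        c (k + m) x = c k (odometer n h m x) + c m x) ∧
      ¬ ∃ L : OdometerSpace n h → ZMod p, Continuous L ∧
        ∀ (m : ℤ) (x : OdometerSpace n h), c m x = L (odometer n h m x) - L x := by
  classical
  obtain ⟨N, hN⟩ := hord
  haveI : Fact p.Prime := ⟨hp⟩
  have hn0 : ∀ i, n i ≠ 0 := fun i => (hpos i).ne'
  -- divisibility along the chain
  have hchain : ∀ i k, n i ∣ n (i + k) := by
    intro i k
    induction k with
    | zero => rfl
    | succ k ih => exact ih.trans (h (i + k))
  have hdvd : ∀ i j, i ≤ j → n i ∣ n j := by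
    intro i j hij
    have := hchain i (j - i)
    rwa [Nat.add_sub_cancel' hij] at this
  -- the p-adic valuation, bounded and monotone
  set v : ℕ → ℕ := fun i => padicValNat p (n i) with hv
  have hvle : ∀ i, v i ≤ N := by
    intro i
    by_contra hc
    exact hN i ((padicValNat_dvd_iff (N + 1) (n i)).2 (Or.inr (not_le.1 hc)))
  have hvmono : ∀ i j, i ≤ j → v i ≤ v j := by
    intro i j hij
    have hdv : p ^ v i ∣ n j := (pow_padicValNat_dvd).trans (hdvd i j hij)
    rcases (padicValNat_dvd_iff (v i) (n j)).1 hdv with h0 | hle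
    · exact absurd h0 (hn0 j)
    · exact hle
  have hbdd : BddAbove (Set.range v) := ⟨N, by rintro _ ⟨i, rfl⟩; exact hvle i⟩
  obtain ⟨i0, hi0⟩ := Nat.sSup_mem (Set.range_nonempty v) hbdd
  set e : ℕ := sSup (Set.range v) with he
  have hle_e : ∀ i, v i ≤ e := fun i => le_csSup hbdd (Set.mem_range_self i)
  have hstab : ∀ j, i0 ≤ j → v j = e := fun j hj =>
    le_antisymm (hle_e j) (hi0 ▸ hvmono i0 j hj)
  set D : ℕ := p ^ e with hDdef
  haveI hne : NeZero (n i0) := ⟨hn0 i0⟩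
  have hD : D ∣ n i0 := by rw [hDdef, ← hi0]; exact pow_padicValNat_dvd
  -- the cocycle
  refine ⟨fun m x => ((((rFun n h i0 D x : ℤ) + m - rFun n h i0 D (odometer n h m x)) /
      (D : ℤ) : ℤ) : ZMod p), ?_, ?_, ?_⟩
  · -- continuity
    intro m
    show Continuous ((fun a : ZMod (n i0) =>
        (((((a.val % D : ℕ) : ℤ) + m - (((a + (m : ZMod (n i0))).val % D : ℕ) : ℤ)) /
          (D : ℤ) : ℤ) : ZMod p)) ∘ (fun x : OdometerSpace n h => x.1 i0))
    exact continuous_of_discreteTopology.comp (continuous_coord n h i0)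
  · -- cocycle identity
    intro k m x
    beta_reduce
    have hcomp := odometer_comp n h k m x
    have h1 : (D : ℤ) ∣ ((rFun n h i0 D (odometer n h m x) : ℤ) + k -
        rFun n h i0 D (odometer n h k (odometer n h m x))) :=
      rFun_dvd n h i0 D hne hD k (odometer n h m x)
    have hsum : ((rFun n h i0 D x : ℤ) + (k + m) - rFun n h i0 D (odometer n h (k + m) x)) =
        ((rFun n h i0 D (odometer n h m x) : ℤ) + k -
          rFun n h i0 D (odometer n h k (odometer n h m x))) +
        ((rFun n h i0 D x : ℤ) + m - rFun n h i0 D (odometer n h m x)) := by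
      rw [hcomp]; ring
    rw [hsum, Int.add_ediv_of_dvd_left h1]
    push_cast
    ring
  · -- not a coboundary
    rintro ⟨L, hL, hLe⟩
    -- the zero point
    set z : OdometerSpace n h := ⟨fun i => 0, fun i => map_zero _⟩ with hz
    set y : ℕ → OdometerSpace n h := fun j => odometer n h (n j) z with hy
    -- y j → z
    have hyt : Filter.Tendsto y Filter.atTop (nhds z) := by
      rw [show (nhds z) = nhds (z : {x : (i : ℕ) → ZMod (n i) //
        ∀ i, ZMod.castHom (h i) (ZMod (n i)) (x (i + 1)) = x i}) from rfl] at *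
      apply tendsto_subtype_rng.2
      rw [tendsto_pi_nhds]
      intro i
      apply Filter.Tendsto.congr' (f₁ := fun _ => (0 : ZMod (n i)))
      · filter_upwards [Filter.eventually_ge_atTop i] with j hj
        have h0 : ((n j : ℤ) : ZMod (n i)) = 0 := by
          haveI : NeZero (n i) := ⟨hn0 i⟩
          rw [Int.cast_natCast, ZMod.natCast_eq_zero_iff]
          exact hdvd i j hj
        show (0 : ZMod (n i)) = (z.1 i) + ((n j : ℤ) : ZMod (n i))
        rw [h0]
        show (0 : ZMod (n i)) = 0 + 0
        rw [add_zero]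
      · exact tendsto_const_nhds
    -- eventually L (y j) = L z
    have hU : IsOpen (L ⁻¹' {L z}) := (isOpen_discrete _).preimage hL
    have hzU : z ∈ L ⁻¹' {L z} := rfl
    have hev : ∀ᶠ j in Filter.atTop, L (y j) = L z := by
      filter_upwards [hyt (hU.mem_nhds hzU)] with j hj
      exact hj
    obtain ⟨j, hj1, hj2⟩ := (hev.and (Filter.eventually_ge_atTop i0)).exists
    -- compute c (n j) z
    have hDj : D ∣ n j := hD.trans (hdvd i0 j hj2)
    have hrz : rFun n h i0 D z = 0 := by
      show (0 : ZMod (n i0)).val % D = 0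
      rw [ZMod.val_zero, Nat.zero_mod]
    have hry : rFun n h i0 D (y j) = 0 := by
      show ((z.1 i0) + ((n j : ℤ) : ZMod (n i0))).val % D = 0
      have h0 : ((n j : ℤ) : ZMod (n i0)) = 0 := by
        rw [Int.cast_natCast, ZMod.natCast_eq_zero_iff]
        exact hdvd i0 j hj2
      rw [h0]
      show ((0 : ZMod (n i0)) + 0).val % D = 0
      rw [add_zero, ZMod.val_zero, Nat.zero_mod]
    have hcz := hLe (n j) z
    rw [hj1, sub_self] at hcz
    beta_reduce at hcz
    -- but c (n j) z = (n j / D : ℕ) ≠ 0 in ZMod p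
    have hcompute : ((rFun n h i0 D z : ℤ) + ((n j : ℕ) : ℤ) -
        rFun n h i0 D (odometer n h (n j) z)) / (D : ℤ) = ((n j / D : ℕ) : ℤ) := by
      rw [show odometer n h ((n j : ℕ) : ℤ) z = y j from rfl, hrz, hry, Int.natCast_ediv]
      norm_num
    rw [hcompute] at hcz
    rw [Int.cast_natCast, ZMod.natCast_eq_zero_iff] at hcz
    have hpd : ¬ p ∣ n j / D := by
      intro hpd
      have h1 : D * p ∣ n j := (Nat.dvd_div_iff_mul_dvd hDj).1 hpd
      have h2 : p ^ (e + 1) ∣ n j := by rwa [pow_succ]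
      rcases (padicValNat_dvd_iff (e + 1) (n j)).1 h2 with h0 | hle
      · exact hn0 j h0
      · rw [show padicValNat p (n j) = v j from rfl, hstab j hj2] at hle
        omega
    exact hpd hcz
end

section
/- Let f : X → X be a minimal homeomorphism of a compact Hausdorff space and c : ℤ × X → ℝ a continuous cocycle (c(m+n, x) = c(m, f^n x) + c(n, x)) that is bounded, i.e., sup_{(n,x) ∈ ℤ×X} |c(n, x)| < ∞. Then c is a continuous coboundary: there exists continuous φ : X → ℝ with c(n, x) = φ(f^n x) − φ(x) for all n ∈ ℤ, x ∈ X. -/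
/-- Cocycle form of the Gottschalk–Hedlund theorem: a bounded continuous real-valued
cocycle over a minimal homeomorphism (given by the `ℤ`-action it generates) of a compact
Hausdorff space is a continuous coboundary. -/
theorem bounded_cocycle_is_coboundary
    {X : Type*} [TopologicalSpace X] [CompactSpace X] [T2Space X]
    (α : ℤ → X → X) (hcont : ∀ n, Continuous (α n))
    (hzero : ∀ x, α 0 x = x) (hadd : ∀ m n x, α (m + n) x = α m (α n x))
    (hmin : ∀ x : X, Dense (Set.range fun n : ℤ => α n x))
    (c : ℤ → X → ℝ) (hccont : ∀ n, Continuous (c n))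
    (hcoc : ∀ (m n : ℤ) (x : X), c (m + n) x = c m (α n x) + c n x)
    (C : ℝ) (hbd : ∀ (n : ℤ) (x : X), |c n x| ≤ C) :
    ∃ φ : X → ℝ, Continuous φ ∧ ∀ (n : ℤ) (x : X), c n x = φ (α n x) - φ x := by
  classical
  rcases isEmpty_or_nonempty X with hX | hX
  · exact ⟨fun _ => 0, continuous_const, fun n x => (IsEmpty.false x).elim⟩
  have hbdda : ∀ x, BddAbove (Set.range fun n : ℤ => c n x) :=
    fun x => ⟨C, by rintro _ ⟨n, rfl⟩; exact (abs_le.1 (hbd n x)).2⟩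
  have hbddb : ∀ x, BddBelow (Set.range fun n : ℤ => c n x) :=
    fun x => ⟨-C, by rintro _ ⟨n, rfl⟩; exact (abs_le.1 (hbd n x)).1⟩
  set φ : X → ℝ := fun x => ⨆ n : ℤ, c n x with hφ
  set ψ : X → ℝ := fun x => ⨅ n : ℤ, c n x with hψ
  have hshift : ∀ (m n : ℤ) (x : X), c n (α m x) = c (n + m) x - c m x := by
    intro m n x; have := hcoc n m x; linarith
  -- reindexing: range of shifted cocycle
  have hrange : ∀ (m : ℤ) (x : X),
      (Set.range fun n : ℤ => c (n + m) x) = Set.range fun n : ℤ => c n x := by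
    intro m x
    ext t
    constructor
    · rintro ⟨n, rfl⟩; exact ⟨n + m, rfl⟩
    · rintro ⟨n, rfl⟩; exact ⟨n - m, by show c (n - m + m) x = c n x; rw [sub_add_cancel]⟩
  have hsupshift : ∀ (m : ℤ) (x : X), (⨆ n : ℤ, c (n + m) x) = φ x := by
    intro m x
    rw [hφ]; simp only [iSup]; rw [hrange m x]
  have hinfshift : ∀ (m : ℤ) (x : X), (⨅ n : ℤ, c (n + m) x) = ψ x := by
    intro m x
    rw [hψ]; simp only [iInf]; rw [hrange m x]
  -- key coboundary identities for φ and ψ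
  have keyφ : ∀ (m : ℤ) (x : X), φ (α m x) = φ x - c m x := by
    intro m x
    have h1 : φ (α m x) = ⨆ n : ℤ, (c (n + m) x - c m x) := by
      rw [hφ]
      exact congrArg iSup (funext fun n => hshift m n x)
    rw [h1]
    have h2 : BddAbove (Set.range fun n : ℤ => c (n + m) x) := by
      rw [hrange m x]; exact hbdda x
    have h3 := Monotone.map_ciSup_of_continuousAt
      (f := fun t : ℝ => t - c m x) (g := fun n : ℤ => c (n + m) x)
      ((continuous_id.sub continuous_const).continuousAt)
      (fun a b hab => by simpa using hab) h2
    rw [← h3, hsupshift m x]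
  have keyψ : ∀ (m : ℤ) (x : X), ψ (α m x) = ψ x - c m x := by
    intro m x
    have h1 : ψ (α m x) = ⨅ n : ℤ, (c (n + m) x - c m x) := by
      rw [hψ]
      exact congrArg iInf (funext fun n => hshift m n x)
    rw [h1]
    have h2 : BddBelow (Set.range fun n : ℤ => c (n + m) x) := by
      rw [hrange m x]; exact hbddb x
    have h3 := Monotone.map_ciInf_of_continuousAt
      (f := fun t : ℝ => t - c m x) (g := fun n : ℤ => c (n + m) x)
      ((continuous_id.sub continuous_const).continuousAt)
      (fun a b hab => by simpa using hab) h2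
    rw [← h3, hinfshift m x]
  -- semicontinuity
  have hφlsc : LowerSemicontinuous φ :=
    lowerSemicontinuous_ciSup hbdda fun n => (hccont n).lowerSemicontinuous
  have hψusc : UpperSemicontinuous ψ :=
    upperSemicontinuous_ciInf hbddb fun n => (hccont n).upperSemicontinuous
  -- u = φ - ψ is lower semicontinuous, invariant, nonnegative
  set u : X → ℝ := fun x => φ x - ψ x with hu
  have hψle : ∀ x, ψ x ≤ φ x := fun x =>
    le_trans (ciInf_le (hbddb x) 0) (le_ciSup (hbdda x) 0)
  have hulsc : LowerSemicontinuous u := by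
    have hneg : LowerSemicontinuous fun x => -ψ x := by
      intro x y hy
      have hy' : y < -ψ x := hy
      filter_upwards [hψusc x (-y) (by linarith)] with z hz
      exact (by linarith : y < -ψ z)
    exact hφlsc.add hneg
  have huinv : ∀ (m : ℤ) (x : X), u (α m x) = u x := by
    intro m x; rw [hu]; simp only; rw [keyφ m x, keyψ m x]; ring
  have h0le : ∀ x, 0 ≤ u x := fun x => by
    have := hψle x; rw [hu]; simp only; linarith
  set m₀ : ℝ := sInf (Set.range u) with hm₀
  have hbb : BddBelow (Set.range u) := ⟨0, by rintro _ ⟨x, rfl⟩; exact h0le x⟩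
  have hne : (Set.range u).Nonempty := Set.range_nonempty u
  have huconst : ∀ x, u x = m₀ := by
    intro y
    have hle : m₀ ≤ u y := csInf_le hbb ⟨y, rfl⟩
    have hge : u y ≤ m₀ := by
      refine le_of_forall_pos_le_add ?_
      intro ε hε
      obtain ⟨-, ⟨x₀, rfl⟩, hx₀⟩ :=
        exists_lt_of_csInf_lt hne (show m₀ < m₀ + ε by linarith)
      have hcl : IsClosed {z : X | u z ≤ m₀ + ε} := hulsc.isClosed_preimage (m₀ + ε)
      have hsub : Set.range (fun n : ℤ => α n x₀) ⊆ {z : X | u z ≤ m₀ + ε} := by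
        rintro _ ⟨n, rfl⟩
        have := huinv n x₀
        simp only [Set.mem_setOf_eq, this]
        exact le_of_lt hx₀
      have hclosure : closure (Set.range fun n : ℤ => α n x₀) ⊆ {z : X | u z ≤ m₀ + ε} :=
        hcl.closure_subset_iff.2 hsub
      have : y ∈ closure (Set.range fun n : ℤ => α n x₀) := by
        rw [(hmin x₀).closure_eq]; trivial
      exact hclosure this
    linarith
  -- φ = ψ + m₀, hence φ is also upper semicontinuous, hence continuous
  have hφeq : ∀ x, φ x = ψ x + m₀ := by
    intro x
    have := huconst x
    rw [hu] at this; simp only at this; linarith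
  have hφusc : UpperSemicontinuous φ := by
    intro x y hy
    rw [hφeq x] at hy
    filter_upwards [hψusc x (y - m₀) (by linarith)] with z hz
    rw [hφeq z]; linarith
  have hφcont : Continuous φ := continuous_iff_lower_upperSemicontinuous.2 ⟨hφlsc, hφusc⟩
  exact ⟨fun x => -φ x, hφcont.neg, fun n x => by show c n x = -φ (α n x) - -φ x; rw [keyφ n x]; ring⟩
end
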